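/- arXiv:2107.09813 — 2 statements merged into one kernel-verified Lean document; each statement's English description precedes it below -/
import Mathlib

section
/- For every pair of valuations μ, ν ∈ T, the set of common lower bounds {ρ ∈ T : ρ ≤ μ and ρ ≤ ν} is nonempty and has a greatest element μ∧ν (the greatest common lower node of μ and ν in T). -/
open Polynomial

namespace MLV

variable {K : Type*} [Field K] {Λ : Type*} [AddCommGroup Λ] [LinearOrder Λ] [IsOrderedAddMonoid Λ]

/-- A valuation on the field `K` with values in `Λ∞ = WithTop Λ`. -/
structure FieldVal (K : Type*) (Λ : Type*) [Field K] [AddCommGroup Λ] [LinearOrder Λ] [IsOrderedAddMonoid Λ] where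
  v : K → WithTop Λ
  map_one' : v 1 = 0
  map_zero' : v 0 = ⊤
  ne_top' : ∀ a : K, a ≠ 0 → v a ≠ ⊤
  map_mul' : ∀ a b : K, v (a * b) = v a + v b
  map_add' : ∀ a b : K, min (v a) (v b) ≤ v (a + b)

/-- `μ` is a node of the tree `T = T(Λ)`: a valuation on `K[x]` with values in `Λ∞`
whose restriction to `K` is `v`. -/
def IsValT (v : FieldVal K Λ) (μ : Polynomial K → WithTop Λ) : Prop :=
  μ 1 = 0 ∧ μ 0 = ⊤ ∧ (∀ f g : Polynomial K, μ (f * g) = μ f + μ g) ∧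
    (∀ f g : Polynomial K, min (μ f) (μ g) ≤ μ (f + g)) ∧
    ∀ a : K, μ (C a) = v.v a

/-- `g ∼_μ h` : `μ(g - h) > μ(g)`. -/
def MuEquiv (μ : Polynomial K → WithTop Λ) (g h : Polynomial K) : Prop :=
  μ g < μ (g - h)

/-- `h ∣_μ g` : `g ∼_μ f * h` for some `f`. -/
def MuDvd (μ : Polynomial K → WithTop Λ) (h g : Polynomial K) : Prop :=
  ∃ f : Polynomial K, MuEquiv μ g (f * h)

/-- `g ∈ K[x] \ K` is `μ`-minimal if it `μ`-divides no nonzero polynomial of smaller degree. -/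
def IsMuMinimal (μ : Polynomial K → WithTop Λ) (g : Polynomial K) : Prop :=
  0 < g.natDegree ∧
    ∀ f : Polynomial K, f ≠ 0 → f.degree < g.degree → ¬ MuDvd μ g f

/-- `g` is `μ`-irreducible. -/
def IsMuIrreducible (μ : Polynomial K → WithTop Λ) (g : Polynomial K) : Prop :=
  μ g ≠ ⊤ ∧ (¬ ∃ f : Polynomial K, MuEquiv μ (f * g) 1) ∧
    ∀ f h : Polynomial K, MuDvd μ g (f * h) → MuDvd μ g f ∨ MuDvd μ g h

/-- A (Maclane-Vaquié) key polynomial for `μ`. -/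
def IsKeyPol (μ : Polynomial K → WithTop Λ) (φ : Polynomial K) : Prop :=
  φ.Monic ∧ IsMuMinimal μ φ ∧ IsMuIrreducible μ φ

/-- An inner node: a valuation admitting key polynomials. -/
def IsInnerNode (μ : Polynomial K → WithTop Λ) : Prop :=
  ∃ φ : Polynomial K, IsKeyPol μ φ

/-- `deg(μ)`: the minimal degree of a key polynomial for `μ`. -/
noncomputable def degOf (μ : Polynomial K → WithTop Λ) : ℕ :=
  sInf {n : ℕ | ∃ φ : Polynomial K, IsKeyPol μ φ ∧ φ.natDegree = n}

/-- A key polynomial of minimal degree. -/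
def IsMinKeyPol (μ : Polynomial K → WithTop Λ) (φ : Polynomial K) : Prop :=
  IsKeyPol μ φ ∧ ∀ ψ : Polynomial K, IsKeyPol μ ψ → φ.natDegree ≤ ψ.natDegree

/-- the class `[φ]_μ` of key polynomials `μ`-equivalent to `φ`. -/
def KeyPolClass (μ : Polynomial K → WithTop Λ) (φ : Polynomial K) : Set (Polynomial K) :=
  {ψ : Polynomial K | IsKeyPol μ ψ ∧ MuEquiv μ ψ φ}

/-- The coefficient `a_s` of the `φ`-expansion `f = Σ_s a_s φ^s` (for `φ` monic nonconstant). -/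
noncomputable def expCoeff (φ f : Polynomial K) (s : ℕ) : Polynomial K :=
  (f /ₘ φ ^ s) %ₘ φ

/-- The augmented valuation `[μ; φ, γ]`, acting on `φ`-expansions by
`ν(Σ_s a_s φ^s) = min_s (μ(a_s) + s γ)`. -/
noncomputable def augVal (μ : Polynomial K → WithTop Λ) (φ : Polynomial K)
    (γ : WithTop Λ) (f : Polynomial K) : WithTop Λ :=
  (Finset.range (f.natDegree + 1)).inf'
    (Finset.nonempty_range_iff.mpr (Nat.succ_ne_zero _))
    fun s => μ (expCoeff φ f s) + s • γ

/-- The depth-zero valuation `ω_{a,δ}`, acting on `(x-a)`-expansions by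
`ω(Σ_s a_s (x-a)^s) = min_s (v(a_s) + s δ)`. -/
noncomputable def omegaVal (v : FieldVal K Λ) (a : K) (δ : WithTop Λ)
    (f : Polynomial K) : WithTop Λ :=
  (Finset.range (f.natDegree + 1)).inf'
    (Finset.nonempty_range_iff.mpr (Nat.succ_ne_zero _))
    fun s => v.v ((taylor a f).coeff s) + s • δ

/-- The tangent direction `t(μ,ν)`: monic polynomials of minimal degree with `μ(φ) < ν(φ)`. -/
def TangentDir (μ ν : Polynomial K → WithTop Λ) : Set (Polynomial K) :=
  {φ : Polynomial K | φ.Monic ∧ μ φ < ν φ ∧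
    ∀ ψ : Polynomial K, ψ.Monic → μ ψ < ν ψ → φ.natDegree ≤ ψ.natDegree}

/-- The set of finite values of `μ`. -/
def valSet (μ : Polynomial K → WithTop Λ) : Set Λ :=
  {γ : Λ | ∃ f : Polynomial K, μ f = (γ : WithTop Λ)}

/-- The value group `Γ_μ`. -/
def valGroup (μ : Polynomial K → WithTop Λ) : AddSubgroup Λ :=
  AddSubgroup.closure (valSet μ)

/-- `Γ = v(K^*)` as a subset of `Λ`. -/
def gammaSet (v : FieldVal K Λ) : Set Λ :=
  {γ : Λ | ∃ a : K, v.v a = (γ : WithTop Λ)}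

/-- The value group `Γ` of the base field valuation. -/
def baseGroup (v : FieldVal K Λ) : AddSubgroup Λ :=
  AddSubgroup.closure (gammaSet v)

/-- `μ` is commensurable over `v` : `Γ_μ/Γ` is torsion. -/
def IsCommensurable (v : FieldVal K Λ) (μ : Polynomial K → WithTop Λ) : Prop :=
  ∀ γ : Λ, γ ∈ valGroup μ → ∃ n : ℕ, 0 < n ∧ n • γ ∈ baseGroup v

/-- `Γ_μ^0 = {μ(a) : a ∈ K[x], 0 ≤ deg(a) < deg(μ)}`. -/
noncomputable def degZeroSet (μ : Polynomial K → WithTop Λ) : Set Λ :=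
  {δ : Λ | ∃ a : Polynomial K, a ≠ 0 ∧ a.natDegree < degOf μ ∧ μ a = (δ : WithTop Λ)}

/-- Equivalence of valuations: an order-preserving isomorphism `ι : Γ_μ → Γ_ν`
with `ν = ι ∘ μ`. -/
def ValEquiv (μ ν : Polynomial K → WithTop Λ) : Prop :=
  ∃ ι : valGroup μ ≃+ valGroup ν,
    Monotone ι ∧ (∀ f : Polynomial K, μ f = ⊤ ↔ ν f = ⊤) ∧
    ∀ (f : Polynomial K) (γ : Λ) (h : μ f = (γ : WithTop Λ)),
      ν f = ((ι ⟨γ, AddSubgroup.subset_closure ⟨f, h⟩⟩ : Λ) : WithTop Λ)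

/-- `β ∼_sme γ` : an order-preserving isomorphism `⟨Γ,β⟩ → ⟨Γ,γ⟩` fixing `Γ`
and mapping `β` to `γ`. -/
def SmeEquiv (v : FieldVal K Λ) (β γ : Λ) : Prop :=
  ∃ ι : (AddSubgroup.closure (gammaSet v ∪ {β}) : AddSubgroup Λ) ≃+
      (AddSubgroup.closure (gammaSet v ∪ {γ}) : AddSubgroup Λ),
    Monotone ι ∧
    (∀ (a : Λ) (ha : a ∈ gammaSet v),
      ((ι ⟨a, AddSubgroup.subset_closure (Set.mem_union_left _ ha)⟩ : Λ) = a)) ∧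
    ((ι ⟨β, AddSubgroup.subset_closure (Set.mem_union_right _ rfl)⟩ : Λ) = γ)

section Families

variable {ι : Type*} [LinearOrder ι]

/-- A totally ordered family of inner nodes of `T`, indexed order-isomorphically by a
totally ordered set, containing no maximal element. -/
def IsTOFamily (v : FieldVal K Λ) (ρ : ι → Polynomial K → WithTop Λ) : Prop :=
  (∀ i, IsValT v (ρ i)) ∧ (∀ i, IsInnerNode (ρ i)) ∧ StrictMono ρ ∧
    ∀ i : ι, ∃ j : ι, i < j

/-- `f` is `A`-stable: the values `ρ_i(f)` are eventually constant. -/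
def IsStablePoly (ρ : ι → Polynomial K → WithTop Λ) (f : Polynomial K) : Prop :=
  ∃ i : ι, ∀ j : ι, i ≤ j → ρ j f = ρ i f

/-- `β` is the stable value `ρ_A(f)`. -/
def IsStableVal (ρ : ι → Polynomial K → WithTop Λ) (f : Polynomial K)
    (β : WithTop Λ) : Prop :=
  ∃ i : ι, ∀ j : ι, i ≤ j → ρ j f = β

open Classical in
/-- The stability function `ρ_A` (junk value `⊤` on unstable polynomials). -/
noncomputable def stableVal (ρ : ι → Polynomial K → WithTop Λ) (f : Polynomial K) :
    WithTop Λ :=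
  if h : ∃ β : WithTop Λ, IsStableVal ρ f β then h.choose else ⊤

/-- The family has stable degree `m`. -/
def HasStableDeg (ρ : ι → Polynomial K → WithTop Λ) (m : ℕ) : Prop :=
  ∃ i : ι, ∀ j : ι, i ≤ j → degOf (ρ j) = m

/-- A continuous family: a totally ordered family of eventually constant degree. -/
def IsContFamily (v : FieldVal K Λ) (ρ : ι → Polynomial K → WithTop Λ) : Prop :=
  IsTOFamily v ρ ∧ ∃ m : ℕ, HasStableDeg ρ m

/-- The stable group `Γ_C`: stable values of nonzero stable polynomials. -/
def stableSet (ρ : ι → Polynomial K → WithTop Λ) : Set Λ :=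
  {δ : Λ | ∃ f : Polynomial K, f ≠ 0 ∧ IsStableVal ρ f (δ : WithTop Λ)}

/-- A limit key polynomial: monic, unstable, of minimal degree among unstable polynomials. -/
def IsLimKeyPol (ρ : ι → Polynomial K → WithTop Λ) (φ : Polynomial K) : Prop :=
  φ.Monic ∧ ¬ IsStablePoly ρ φ ∧
    ∀ f : Polynomial K, ¬ IsStablePoly ρ f → φ.natDegree ≤ f.natDegree

/-- An essential continuous family: `m(C) < m_∞(C) < ∞`. -/
def IsEssential (v : FieldVal K Λ) (ρ : ι → Polynomial K → WithTop Λ) : Prop :=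
  IsTOFamily v ρ ∧
    ∃ m : ℕ, HasStableDeg ρ m ∧
      ∃ φ : Polynomial K, IsLimKeyPol ρ φ ∧ m < φ.natDegree

/-- The limit augmentation `[C; φ, γ]`, acting on `φ`-expansions by
`ν(Σ_s a_s φ^s) = min_s (ρ_C(a_s) + s γ)`. -/
noncomputable def limAugVal (ρ : ι → Polynomial K → WithTop Λ) (φ : Polynomial K)
    (γ : WithTop Λ) (f : Polynomial K) : WithTop Λ :=
  (Finset.range (f.natDegree + 1)).inf'
    (Finset.nonempty_range_iff.mpr (Nat.succ_ne_zero _))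
    fun s => stableVal ρ (expCoeff φ f s) + s • γ

/-- Equivalence of totally ordered families: mutual cofinality. -/
def FamEquiv {κ : Type*} [LinearOrder κ] (ρ : ι → Polynomial K → WithTop Λ)
    (σ : κ → Polynomial K → WithTop Λ) : Prop :=
  (∀ i : ι, ∃ j : κ, ρ i ≤ σ j) ∧ ∀ j : κ, ∃ i : ι, σ j ≤ ρ i

end Families

end MLV

open MLV

namespace MLVAux

open Finset

variable {K : Type*} [Field K] {Λ : Type*} [AddCommGroup Λ] [LinearOrder Λ] [IsOrderedAddMonoid Λ]

/-! ### `WithTop` helpers -/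

lemma nsmul_coe (n : ℕ) (a : Λ) : n • ((a : WithTop Λ)) = ((n • a : Λ) : WithTop Λ) := by
  induction n with
  | zero => simp
  | succ n ih => rw [succ_nsmul, succ_nsmul, ih, WithTop.coe_add]

lemma nsmul_top {n : ℕ} (hn : n ≠ 0) : n • (⊤ : WithTop Λ) = ⊤ := by
  cases n with
  | zero => exact absurd rfl hn
  | succ n => rw [succ_nsmul]; exact add_top _

lemma nsmul_ne_top {n : ℕ} {a : WithTop Λ} (ha : a ≠ ⊤) : n • a ≠ ⊤ := by
  lift a to Λ using ha
  rw [nsmul_coe]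
  exact WithTop.coe_ne_top

lemma nsmul_mono {a b : WithTop Λ} (h : a ≤ b) (n : ℕ) : n • a ≤ n • b := by
  induction n with
  | zero => simp
  | succ n ih => rw [succ_nsmul, succ_nsmul]; exact add_le_add ih h

lemma nsmul_strict_mono {a b : WithTop Λ} (h : a < b) {n : ℕ} (hn : 1 ≤ n) :
    n • a < n • b := by
  lift a to Λ using h.ne_top
  induction b with
  | top =>
    rw [nsmul_top (by omega), nsmul_coe]
    exact WithTop.coe_lt_top _
  | coe b =>
    rw [nsmul_coe, nsmul_coe, WithTop.coe_lt_coe]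
    rw [WithTop.coe_lt_coe] at h
    obtain ⟨m, rfl⟩ : ∃ m, n = m + 1 := ⟨n - 1, by omega⟩
    clear hn
    induction m with
    | zero => simpa using h
    | succ m ih => rw [succ_nsmul a, succ_nsmul b]; exact add_lt_add ih h

lemma add_self_eq_zero' {x : WithTop Λ} (h : x + x = 0) : x = 0 := by
  induction x with
  | top => simp at h
  | coe a =>
    rw [← WithTop.coe_add, ← WithTop.coe_zero, WithTop.coe_eq_coe] at h
    rw [← WithTop.coe_zero, WithTop.coe_eq_coe]
    rcases lt_trichotomy a 0 with hlt | heq | hgt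
    · exact absurd h (ne_of_lt (by simpa using add_lt_add hlt hlt))
    · exact heq
    · exact absurd h (ne_of_gt (by simpa using add_lt_add hgt hgt))

/-! ### Basic valuation lemmas -/

section Val

variable {v : FieldVal K Λ} {μ : Polynomial K → WithTop Λ} (hμ : IsValT v μ)
include hμ

lemma val_one : μ 1 = 0 := hμ.1

lemma val_zero : μ 0 = ⊤ := hμ.2.1

lemma val_mul (f g : Polynomial K) : μ (f * g) = μ f + μ g := hμ.2.2.1 f g

lemma val_min_le (f g : Polynomial K) : min (μ f) (μ g) ≤ μ (f + g) := hμ.2.2.2.1 f g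

lemma val_C (a : K) : μ (Polynomial.C a) = v.v a := hμ.2.2.2.2 a

lemma val_neg (f : Polynomial K) : μ (-f) = μ f := by
  have h1 : μ (-1 : Polynomial K) = 0 := by
    have := hμ.2.2.1 (-1 : Polynomial K) (-1)
    rw [neg_one_mul, neg_neg, val_one hμ] at this
    exact (add_self_eq_zero' this.symm)
  have := hμ.2.2.1 (-1 : Polynomial K) f
  rw [neg_one_mul, h1, zero_add] at this
  exact this

lemma val_pow (f : Polynomial K) (n : ℕ) : μ (f ^ n) = n • μ f := by
  induction n with
  | zero => rw [pow_zero, zero_nsmul]; exact val_one hμ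
  | succ n ih => rw [pow_succ, val_mul hμ, ih, succ_nsmul]

lemma val_add_eq_left {f g : Polynomial K} (h : μ f < μ g) : μ (f + g) = μ f := by
  refine le_antisymm ?_ (le_trans (le_min le_rfl h.le) (val_min_le hμ f g))
  by_contra hc
  push_neg at hc
  have h2 : μ ((f + g) + (-g)) = μ f := by rw [add_neg_cancel_right]
  have h3 := val_min_le hμ (f + g) (-g)
  rw [val_neg hμ, h2] at h3
  exact absurd (lt_of_lt_of_le (lt_min hc h) h3) (lt_irrefl _)

lemma val_sum_ge {ι : Type*} {s : Finset ι} {F : ι → Polynomial K} {m : WithTop Λ}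
    (h : ∀ i ∈ s, m ≤ μ (F i)) : m ≤ μ (∑ i ∈ s, F i) := by
  classical
  induction s using Finset.cons_induction with
  | empty => rw [Finset.sum_empty, val_zero hμ]; exact le_top
  | cons a s ha ih =>
    rw [Finset.sum_cons]
    refine le_trans (le_min (h a (Finset.mem_cons_self a s)) ?_) (val_min_le hμ _ _)
    exact ih fun i hi => h i (Finset.mem_cons_of_mem hi)

lemma val_sum_gt {ι : Type*} {s : Finset ι} {F : ι → Polynomial K} {m : WithTop Λ}
    (hm : m ≠ ⊤) (h : ∀ i ∈ s, m < μ (F i)) : m < μ (∑ i ∈ s, F i) := by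
  classical
  induction s using Finset.cons_induction with
  | empty => rw [Finset.sum_empty, val_zero hμ]; exact hm.lt_top
  | cons a s ha ih =>
    rw [Finset.sum_cons]
    refine lt_of_lt_of_le (lt_min (h a (Finset.mem_cons_self a s)) ?_) (val_min_le hμ _ _)
    exact ih fun i hi => h i (Finset.mem_cons_of_mem hi)

lemma val_add_const_ge {f g : Polynomial K} {m c : WithTop Λ}
    (h1 : m ≤ μ f + c) (h2 : m ≤ μ g + c) : m ≤ μ (f + g) + c := by
  have hmin : min (μ f) (μ g) + c = min (μ f + c) (μ g + c) := by
    rcases le_total (μ f) (μ g) with h | h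
    · rw [min_eq_left h, min_eq_left (add_le_add_left h c)]
    · rw [min_eq_right h, min_eq_right (add_le_add_left h c)]
  calc m ≤ min (μ f + c) (μ g + c) := le_min h1 h2
    _ = min (μ f) (μ g) + c := hmin.symm
    _ ≤ μ (f + g) + c := add_le_add_left (val_min_le hμ f g) c

lemma val_sum_const_ge {ι : Type*} {s : Finset ι} {F : ι → Polynomial K} {m c : WithTop Λ}
    (h : ∀ i ∈ s, m ≤ μ (F i) + c) : m ≤ μ (∑ i ∈ s, F i) + c := by
  classical
  induction s using Finset.cons_induction with
  | empty => rw [Finset.sum_empty, val_zero hμ, top_add]; exact le_top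
  | cons a s ha ih =>
    rw [Finset.sum_cons]
    exact val_add_const_ge hμ (h a (Finset.mem_cons_self a s))
      (ih fun i hi => h i (Finset.mem_cons_of_mem hi))

lemma val_C_mul (c : K) (f : Polynomial K) : μ (Polynomial.C c * f) = v.v c + μ f := by
  rw [val_mul hμ, val_C hμ]

end Val

/-- Monicization preserving difference of two valuations. -/
lemma exists_monic_of_val_ne {v : FieldVal K Λ} {μ ν : Polynomial K → WithTop Λ}
    (hμ : IsValT v μ) (hν : IsValT v ν) {f : Polynomial K} (h : μ f ≠ ν f) :
    ∃ ψ : Polynomial K, ψ.Monic ∧ ψ.natDegree = f.natDegree ∧ μ ψ ≠ ν ψ := by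
  have hf : f ≠ 0 := by
    rintro rfl
    rw [val_zero hμ, val_zero hν] at h
    exact h rfl
  have hc : f.leadingCoeff ≠ 0 := Polynomial.leadingCoeff_ne_zero.mpr hf
  refine ⟨f * Polynomial.C f.leadingCoeff⁻¹, Polynomial.monic_mul_leadingCoeff_inv hf, ?_, ?_⟩
  · exact Polynomial.natDegree_mul_C_eq_of_mul_ne_zero
      (by rw [mul_inv_cancel₀ hc]; exact one_ne_zero)
  · intro heq
    rw [val_mul hμ, val_mul hν, val_C hμ, val_C hν] at heq
    exact h (WithTop.add_right_cancel (v.ne_top' _ (inv_ne_zero hc)) heq)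

end MLVAux

set_option linter.unusedSectionVars false
namespace MLVAux

open Polynomial Finset

variable {K : Type*} [Field K] {Λ : Type*} [AddCommGroup Λ] [LinearOrder Λ] [IsOrderedAddMonoid Λ]

/-! ### Expansion machinery -/

lemma degree_lt_degree_of_natDegree_lt {p q : Polynomial K} (hq : q ≠ 0)
    (h : p.natDegree < q.natDegree) : p.degree < q.degree := by
  by_cases hp : p = 0
  · rw [hp, Polynomial.degree_zero]
    exact Ne.bot_lt (by rwa [Ne, Polynomial.degree_eq_bot])
  · exact (Polynomial.natDegree_lt_natDegree_iff hp).mp h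

section Expansion

variable {φ : Polynomial K} (hm : φ.Monic) (hd : 1 ≤ φ.natDegree)
include hm hd

lemma natDegree_modByMonic_lt' (f : Polynomial K) : (f %ₘ φ).natDegree < φ.natDegree := by
  by_cases h0 : f %ₘ φ = 0
  · rw [h0, Polynomial.natDegree_zero]; omega
  · exact Polynomial.natDegree_lt_natDegree h0 (Polynomial.degree_modByMonic_lt f hm)

lemma expCoeff_natDegree_lt (f : Polynomial K) (s : ℕ) :
    (expCoeff φ f s).natDegree < φ.natDegree :=
  natDegree_modByMonic_lt' hm hd _

omit hd in
lemma expCoeff_zero_left (s : ℕ) : expCoeff φ 0 s = (0 : Polynomial K) := by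
  unfold expCoeff
  rw [Polynomial.zero_divByMonic, Polynomial.zero_modByMonic]

lemma divByMonic_pow_succ (f : Polynomial K) (k : ℕ) :
    f /ₘ (φ ^ (k + 1)) = (f /ₘ φ) /ₘ (φ ^ k) := by
  have hφ0 : φ ≠ 0 := hm.ne_zero
  have hpow : ∀ n : ℕ, (φ ^ n).natDegree = n * φ.natDegree := fun n =>
    Polynomial.natDegree_pow φ n
  refine (Polynomial.div_modByMonic_unique ((f /ₘ φ) /ₘ (φ ^ k))
    (φ * ((f /ₘ φ) %ₘ (φ ^ k)) + f %ₘ φ) (hm.pow (k+1)) ⟨?_, ?_⟩).1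
  · have h1 := Polynomial.modByMonic_add_div f φ
    have h2 := Polynomial.modByMonic_add_div (f /ₘ φ) (φ ^ k)
    calc φ * ((f /ₘ φ) %ₘ (φ ^ k)) + f %ₘ φ + φ ^ (k+1) * ((f /ₘ φ) /ₘ (φ ^ k))
        = f %ₘ φ + φ * ((f /ₘ φ) %ₘ (φ ^ k) + φ ^ k * ((f /ₘ φ) /ₘ (φ ^ k))) := by ring
      _ = f := by rw [h2, h1]
  · have hne : (φ : Polynomial K) ^ (k+1) ≠ 0 := pow_ne_zero _ hφ0
    apply degree_lt_degree_of_natDegree_lt hne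
    rw [hpow]
    have hkd : 0 < (k + 1) * φ.natDegree := Nat.mul_pos (by omega) (by omega)
    have hexp : (k + 1) * φ.natDegree = k * φ.natDegree + φ.natDegree := by ring
    have hb1 : (f %ₘ φ).natDegree < φ.natDegree := natDegree_modByMonic_lt' hm hd f
    have hb2 : (φ * ((f /ₘ φ) %ₘ (φ ^ k))).natDegree < (k + 1) * φ.natDegree := by
      by_cases h0 : (f /ₘ φ) %ₘ (φ ^ k) = 0
      · rw [h0, mul_zero, Polynomial.natDegree_zero]
        have := hd; omega
      · have hmod : ((f /ₘ φ) %ₘ (φ ^ k)).natDegree < (φ ^ k).natDegree :=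
          Polynomial.natDegree_lt_natDegree h0
            (Polynomial.degree_modByMonic_lt _ (hm.pow k))
        have := Polynomial.natDegree_mul_le (p := φ) (q := (f /ₘ φ) %ₘ (φ ^ k))
        rw [hpow] at hmod
        omega
    have := Polynomial.natDegree_add_le (φ * ((f /ₘ φ) %ₘ (φ ^ k))) (f %ₘ φ)
    have hd1 : φ.natDegree ≤ (k+1) * φ.natDegree := by omega
    omega

lemma expCoeff_succ (f : Polynomial K) (k : ℕ) :
    expCoeff φ f (k + 1) = expCoeff φ (f /ₘ φ) k := by
  unfold expCoeff
  rw [divByMonic_pow_succ hm hd]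

omit hd in
lemma expCoeff_zero_idx (f : Polynomial K) : expCoeff φ f 0 = f %ₘ φ := by
  unfold expCoeff
  rw [pow_zero, Polynomial.divByMonic_one]

lemma expCoeff_of_natDegree_lt {f : Polynomial K} (h : f.natDegree < φ.natDegree) :
    expCoeff φ f 0 = f := by
  rw [expCoeff_zero_idx hm]
  exact (Polynomial.modByMonic_eq_self_iff hm).mpr
    (degree_lt_degree_of_natDegree_lt hm.ne_zero h)

lemma expCoeff_eq_zero_of_large {f : Polynomial K} {s : ℕ}
    (h : f.natDegree < s * φ.natDegree) : expCoeff φ f s = 0 := by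
  unfold expCoeff
  have : f /ₘ (φ ^ s) = 0 := by
    rw [Polynomial.divByMonic_eq_zero_iff (hm.pow s)]
    apply degree_lt_degree_of_natDegree_lt (pow_ne_zero _ hm.ne_zero)
    rwa [Polynomial.natDegree_pow]
  rw [this, Polynomial.zero_modByMonic]

lemma expCoeff_eq_zero_of_gt {f : Polynomial K} {s : ℕ} (h : f.natDegree < s) :
    expCoeff φ f s = 0 := by
  apply expCoeff_eq_zero_of_large hm hd
  calc f.natDegree < s := h
    _ ≤ s * φ.natDegree := Nat.le_mul_of_pos_right s (by omega)

lemma expansion_sum (f : Polynomial K) (N : ℕ) (hN : f.natDegree ≤ N) :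
    ∑ k ∈ Finset.range (N + 1), expCoeff φ f k * φ ^ k = f := by
  induction N generalizing f with
  | zero =>
    rw [Finset.sum_range_one, pow_zero, mul_one]
    exact expCoeff_of_natDegree_lt hm hd (by omega)
  | succ N ih =>
    rw [Finset.sum_range_succ']
    have hdiv : (f /ₘ φ).natDegree ≤ N := by
      rw [Polynomial.natDegree_divByMonic f hm]; omega
    have hstep : ∀ k, expCoeff φ f (k + 1) * φ ^ (k + 1)
        = (expCoeff φ (f /ₘ φ) k * φ ^ k) * φ := by
      intro k
      rw [expCoeff_succ hm hd, pow_succ]; ring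
    calc (∑ k ∈ Finset.range (N + 1), expCoeff φ f (k+1) * φ ^ (k+1))
          + expCoeff φ f 0 * φ ^ 0
        = (∑ k ∈ Finset.range (N + 1), expCoeff φ (f /ₘ φ) k * φ ^ k) * φ
          + f %ₘ φ := by
          rw [Finset.sum_mul, expCoeff_zero_idx hm, pow_zero, mul_one]
          exact congrArg₂ (· + ·) (Finset.sum_congr rfl fun k _ => hstep k) rfl
      _ = f := by
          rw [ih _ hdiv, mul_comm, add_comm]
          exact Polynomial.modByMonic_add_div f φ

lemma expansion_unique (c : ℕ → Polynomial K) (N : ℕ)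
    (hdeg : ∀ k, (c k).natDegree < φ.natDegree)
    {f : Polynomial K} (hrep : ∑ k ∈ Finset.range (N + 1), c k * φ ^ k = f) :
    ∀ k ≤ N, expCoeff φ f k = c k := by
  induction N generalizing f c with
  | zero =>
    intro k hk
    interval_cases k
    rw [Finset.sum_range_one, pow_zero, mul_one] at hrep
    rw [← hrep]
    exact expCoeff_of_natDegree_lt hm hd (hdeg 0)
  | succ N ih =>
    set g : Polynomial K := ∑ k ∈ Finset.range (N + 1), c (k + 1) * φ ^ k with hg
    have hsplit : c 0 + φ * g = f := by
      rw [← hrep, Finset.sum_range_succ', pow_zero, mul_one, hg, Finset.mul_sum]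
      rw [add_comm]
      congr 1
      exact Finset.sum_congr rfl fun k _ => by rw [pow_succ]; ring
    have hdm := Polynomial.div_modByMonic_unique g (c 0) hm
      ⟨hsplit, degree_lt_degree_of_natDegree_lt hm.ne_zero (hdeg 0)⟩
    intro k hk
    match k with
    | 0 => rw [expCoeff_zero_idx hm, hdm.2]
    | (j + 1) =>
      rw [expCoeff_succ hm hd, hdm.1]
      exact ih (fun k => c (k + 1)) (fun k => hdeg (k + 1)) rfl j (by omega)

lemma expCoeff_add (f g : Polynomial K) (k : ℕ) :
    expCoeff φ (f + g) k = expCoeff φ f k + expCoeff φ g k := by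
  set N := max f.natDegree g.natDegree with hN
  by_cases hk : k ≤ N
  · have hrep : ∑ j ∈ Finset.range (N + 1), (expCoeff φ f j + expCoeff φ g j) * φ ^ j
        = f + g := by
      rw [show (∑ j ∈ Finset.range (N + 1), (expCoeff φ f j + expCoeff φ g j) * φ ^ j)
          = (∑ j ∈ Finset.range (N + 1), expCoeff φ f j * φ ^ j)
            + ∑ j ∈ Finset.range (N + 1), expCoeff φ g j * φ ^ j by
        rw [← Finset.sum_add_distrib]
        exact Finset.sum_congr rfl fun j _ => by ring]
      rw [expansion_sum hm hd f N (le_max_left _ _), expansion_sum hm hd g N (le_max_right _ _)]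
    have hdeg : ∀ j, (expCoeff φ f j + expCoeff φ g j).natDegree < φ.natDegree := by
      intro j
      have h1 := expCoeff_natDegree_lt hm hd f j
      have h2 := expCoeff_natDegree_lt hm hd g j
      have := Polynomial.natDegree_add_le (expCoeff φ f j) (expCoeff φ g j)
      omega
    exact expansion_unique hm hd _ N hdeg hrep k hk
  · push_neg at hk
    have h1 : expCoeff φ (f + g) k = 0 := expCoeff_eq_zero_of_gt hm hd
      (lt_of_le_of_lt (Polynomial.natDegree_add_le f g) (by omega))
    have h2 : expCoeff φ f k = 0 := expCoeff_eq_zero_of_gt hm hd (by omega)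
    have h3 : expCoeff φ g k = 0 := expCoeff_eq_zero_of_gt hm hd (by omega)
    rw [h1, h2, h3, add_zero]

end Expansion

end MLVAux

namespace MLVAux

set_option linter.unusedSectionVars false

open Polynomial Finset

variable {K : Type*} [Field K] {Λ : Type*} [AddCommGroup Λ] [LinearOrder Λ] [IsOrderedAddMonoid Λ]

/-! ### `augVal` lemmas -/

section AugVal

variable {v : FieldVal K Λ} {μ : Polynomial K → WithTop Λ} (hμ : IsValT v μ)
variable {φ : Polynomial K} (hm : φ.Monic) (hd : 1 ≤ φ.natDegree) (γ : WithTop Λ)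

include hμ hm hd

lemma augVal_le_term (f : Polynomial K) (s : ℕ) :
    augVal μ φ γ f ≤ μ (expCoeff φ f s) + s • γ := by
  by_cases hs : s ≤ f.natDegree
  · exact Finset.inf'_le _ (Finset.mem_range.mpr (by omega))
  · rw [expCoeff_eq_zero_of_gt hm hd (by omega), val_zero hμ, top_add]
    exact le_top

lemma le_augVal {f : Polynomial K} {m : WithTop Λ}
    (h : ∀ s, s ≤ f.natDegree → m ≤ μ (expCoeff φ f s) + s • γ) :
    m ≤ augVal μ φ γ f :=
  Finset.le_inf' _ _ fun s hs => h s (by have := Finset.mem_range.mp hs; omega)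

lemma augVal_exists_term (f : Polynomial K) :
    ∃ s ≤ f.natDegree, augVal μ φ γ f = μ (expCoeff φ f s) + s • γ := by
  obtain ⟨s, hs, h⟩ := Finset.exists_mem_eq_inf' (α := WithTop Λ)
    (Finset.nonempty_range_iff.mpr (Nat.succ_ne_zero f.natDegree))
    (fun s => μ (expCoeff φ f s) + s • γ)
  exact ⟨s, by have := Finset.mem_range.mp hs; omega, h⟩

lemma augVal_zero : augVal μ φ γ 0 = ⊤ := by
  refine le_antisymm le_top (le_augVal hμ hm hd γ fun s _ => ?_)
  rw [expCoeff_zero_left hm, val_zero hμ, top_add]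

lemma augVal_of_natDegree_lt {f : Polynomial K} (h : f.natDegree < φ.natDegree) :
    augVal μ φ γ f = μ f := by
  refine le_antisymm ?_ (le_augVal hμ hm hd γ fun s hs => ?_)
  · have := augVal_le_term hμ hm hd γ f 0
    rwa [expCoeff_of_natDegree_lt hm hd h, zero_nsmul, add_zero] at this
  · match s with
    | 0 => rw [expCoeff_of_natDegree_lt hm hd h, zero_nsmul, add_zero]
    | (k + 1) =>
      have hlarge : f.natDegree < (k + 1) * φ.natDegree := by
        have h1 : 1 * φ.natDegree ≤ (k + 1) * φ.natDegree :=
          Nat.mul_le_mul_right _ (by omega)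
        omega
      rw [expCoeff_eq_zero_of_large hm hd hlarge, val_zero hμ, top_add]
      exact le_top

end AugVal

/-! ### The key structure lemma (Lemma L):
any strict lower bound of `τ` in `T` is dominated by a suitable truncation of `τ`. -/

lemma lemL {v : FieldVal K Λ} {τ ρ' : Polynomial K → WithTop Λ}
    (hτ : IsValT v τ) (hρ' : IsValT v ρ')
    {φ' : Polynomial K} (hm' : φ'.Monic) (hd' : 1 ≤ φ'.natDegree)
    (hagree : ∀ h : Polynomial K, h.natDegree < φ'.natDegree → ρ' h = τ h)
    (hβ : ρ' φ' < τ φ') (hle : ρ' ≤ τ) :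
    ∀ (f : Polynomial K) (t : ℕ), ρ' f ≤ τ (expCoeff φ' f t) + t • (ρ' φ') := by
  set β : WithTop Λ := ρ' φ' with hβdef
  have hβne : β ≠ ⊤ := hβ.ne_top
  suffices hmain : ∀ f : Polynomial K, ρ' f ≤ augVal τ φ' β f by
    intro f t
    exact (hmain f).trans (augVal_le_term hτ hm' hd' β f t)
  intro f
  by_contra hc
  push_neg at hc
  set m : WithTop Λ := augVal τ φ' β f with hmdef
  have hmne : m ≠ ⊤ := hc.ne_top
  -- term values under ρ'
  have hterm : ∀ t : ℕ, ρ' (expCoeff φ' f t * φ' ^ t) = τ (expCoeff φ' f t) + t • β := by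
    intro t
    rw [val_mul hρ', val_pow hρ', hagree _ (expCoeff_natDegree_lt hm' hd' f t)]
  set N := f.natDegree with hN
  set S : Finset ℕ := (Finset.range (N + 1)).filter
    (fun t => τ (expCoeff φ' f t) + t • β = m) with hS
  have hSne : S.Nonempty := by
    obtain ⟨s, hs, hseq⟩ := augVal_exists_term hτ hm' hd' β f
    exact ⟨s, Finset.mem_filter.mpr ⟨Finset.mem_range.mpr (by omega), hseq.symm⟩⟩
  set t1 : ℕ := S.min' hSne with ht1
  have ht1S : t1 ∈ S := S.min'_mem hSne
  have ht1eq : τ (expCoeff φ' f t1) + t1 • β = m := (Finset.mem_filter.mp ht1S).2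
  -- split f into the minimizing part and the rest
  have hsplit : (∑ t ∈ S, expCoeff φ' f t * φ' ^ t)
      + (∑ t ∈ (Finset.range (N + 1)).filter
          (fun t => ¬ (τ (expCoeff φ' f t) + t • β = m)), expCoeff φ' f t * φ' ^ t) = f := by
    rw [hS, Finset.sum_filter_add_sum_filter_not]
    exact expansion_sum hm' hd' f N le_rfl
  have he : m < ρ' (∑ t ∈ (Finset.range (N + 1)).filter
      (fun t => ¬ (τ (expCoeff φ' f t) + t • β = m)), expCoeff φ' f t * φ' ^ t) := by
    refine val_sum_gt hρ' hmne fun t ht => ?_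
    obtain ⟨htr, htne⟩ := Finset.mem_filter.mp ht
    rw [hterm t]
    exact lt_of_le_of_ne (Finset.inf'_le _ htr) (Ne.symm htne)
  have hh_ge : m ≤ ρ' (∑ t ∈ S, expCoeff φ' f t * φ' ^ t) := by
    refine val_sum_ge hρ' fun t ht => ?_
    rw [hterm t, (Finset.mem_filter.mp ht).2]
  have hh : m < ρ' (∑ t ∈ S, expCoeff φ' f t * φ' ^ t) := by
    rcases lt_or_eq_of_le hh_ge with h | h
    · exact h
    · exfalso
      have hfm : ρ' f = m := by
        rw [← hsplit, val_add_eq_left hρ' (by rw [← h]; exact he), ← h]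
      exact absurd hfm (ne_of_gt hc)
  -- factor φ'^t1 out of the minimizing part
  set g : Polynomial K := ∑ t ∈ S, expCoeff φ' f t * φ' ^ (t - t1) with hg
  have hfactor : (∑ t ∈ S, expCoeff φ' f t * φ' ^ t) = φ' ^ t1 * g := by
    rw [hg, Finset.mul_sum]
    refine Finset.sum_congr rfl fun t ht => ?_
    have htge : t1 ≤ t := S.min'_le t ht
    rw [← mul_assoc, mul_comm (φ' ^ t1), mul_assoc, ← pow_add]
    congr 2
    omega
  have hτat1_ne : τ (expCoeff φ' f t1) ≠ ⊤ := by
    intro h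
    exact hmne (by rw [← ht1eq, h, top_add])
  have hρg : τ (expCoeff φ' f t1) < ρ' g := by
    have hlt2 : m < ρ' (φ' ^ t1 * g) := by rw [← hfactor]; exact hh
    rw [val_mul hρ', val_pow hρ', ← hβdef, ← ht1eq,
      add_comm (τ (expCoeff φ' f t1))] at hlt2
    exact (WithTop.add_lt_add_iff_left (nsmul_ne_top hβne)).mp hlt2
  have hgsplit : g = expCoeff φ' f t1
      + ∑ t ∈ S.erase t1, expCoeff φ' f t * φ' ^ (t - t1) := by
    rw [hg, ← Finset.add_sum_erase S _ ht1S, Nat.sub_self, pow_zero, mul_one]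
  have hrest : τ (expCoeff φ' f t1)
      < τ (∑ t ∈ S.erase t1, expCoeff φ' f t * φ' ^ (t - t1)) := by
    refine val_sum_gt hτ hτat1_ne fun t ht => ?_
    have htS : t ∈ S := Finset.mem_of_mem_erase ht
    have htne : t ≠ t1 := Finset.ne_of_mem_erase ht
    have htge : t1 ≤ t := S.min'_le t htS
    have hn1 : 1 ≤ t - t1 := by omega
    have hteq : τ (expCoeff φ' f t) + t • β = m := (Finset.mem_filter.mp htS).2
    have hkey : τ (expCoeff φ' f t) + (t - t1) • β = τ (expCoeff φ' f t1) := by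
      have hts : t = t1 + (t - t1) := by omega
      rw [hts, add_nsmul] at hteq
      rw [← ht1eq] at hteq
      have hrearr : τ (expCoeff φ' f (t1 + (t - t1)))
            + (t1 • β + (t - t1) • β)
          = (τ (expCoeff φ' f (t1 + (t - t1))) + (t - t1) • β) + t1 • β := by
        rw [← add_assoc, add_right_comm]
      rw [hrearr] at hteq
      have := WithTop.add_right_cancel (nsmul_ne_top hβne) hteq
      rw [← hts] at this
      exact this
    have hτat_ne : τ (expCoeff φ' f t) ≠ ⊤ := by
      intro h
      exact hτat1_ne (by rw [← hkey, h, top_add])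
    rw [val_mul hτ, val_pow hτ, ← hkey]
    exact (WithTop.add_lt_add_iff_left hτat_ne).mpr (nsmul_strict_mono hβ hn1)
  have hτg : τ g = τ (expCoeff φ' f t1) := by
    rw [hgsplit]
    exact val_add_eq_left hτ hrest
  exact absurd (hle g) (not_le.mpr (by rw [hτg]; exact hρg))

end MLVAux

namespace MLVAux

set_option linter.unusedSectionVars false
set_option maxHeartbeats 1000000

open Polynomial Finset

variable {K : Type*} [Field K] {Λ : Type*} [AddCommGroup Λ] [LinearOrder Λ] [IsOrderedAddMonoid Λ]

section Mul

variable {v : FieldVal K Λ} {μ : Polynomial K → WithTop Λ} (hμ : IsValT v μ)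
variable {φ : Polynomial K} (hm : φ.Monic) (hd : 1 ≤ φ.natDegree)
variable {γ : WithTop Λ} (hγne : γ ≠ ⊤)
variable (hA : ∀ a b : Polynomial K, a ≠ 0 → b ≠ 0 →
    a.natDegree < φ.natDegree → b.natDegree < φ.natDegree →
    μ ((a * b) %ₘ φ) = μ a + μ b ∧ μ a + μ b ≤ μ ((a * b) /ₘ φ) + γ)

include hμ hm hd hγne hA

lemma augVal_mul (f g : Polynomial K) :
    augVal μ φ γ (f * g) = augVal μ φ γ f + augVal μ φ γ g := by
  by_cases hf0 : f = 0
  · rw [hf0, zero_mul, augVal_zero hμ hm hd γ, top_add]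
  by_cases hg0 : g = 0
  · rw [hg0, mul_zero, augVal_zero hμ hm hd γ, add_top]
  set Nf := f.natDegree with hNf
  set Ng := g.natDegree with hNg
  set P : Finset (ℕ × ℕ) := Finset.range (Nf + 1) ×ˢ Finset.range (Ng + 1) with hP
  set R : ℕ × ℕ → Polynomial K :=
    fun p => (expCoeff φ f p.1 * expCoeff φ g p.2) %ₘ φ with hR
  set Q : ℕ × ℕ → Polynomial K :=
    fun p => (expCoeff φ f p.1 * expCoeff φ g p.2) /ₘ φ with hQ
  set c : ℕ → Polynomial K := fun k =>
    (∑ p ∈ P.filter (fun p => p.1 + p.2 = k), R p)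
      + (∑ p ∈ P.filter (fun p => p.1 + p.2 + 1 = k), Q p) with hc
  have hPmem : ∀ p : ℕ × ℕ, p ∈ P → p.1 ≤ Nf ∧ p.2 ≤ Ng := by
    intro p hp
    obtain ⟨h1, h2⟩ := Finset.mem_product.mp hp
    exact ⟨by have := Finset.mem_range.mp h1; omega,
           by have := Finset.mem_range.mp h2; omega⟩
  -- the representation of f * g with coefficients c k
  have hrep : ∑ k ∈ Finset.range (Nf + Ng + 1 + 1), c k * φ ^ k = f * g := by
    have e1 : ∀ k ∈ Finset.range (Nf + Ng + 1 + 1),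
        c k * φ ^ k
          = (∑ p ∈ P.filter (fun p => p.1 + p.2 = k), R p * φ ^ (p.1 + p.2))
            + ∑ p ∈ P.filter (fun p => p.1 + p.2 + 1 = k), Q p * φ ^ (p.1 + p.2 + 1) := by
      intro k _
      rw [hc, add_mul, Finset.sum_mul, Finset.sum_mul]
      congr 1
      · exact Finset.sum_congr rfl fun p hp => by rw [(Finset.mem_filter.mp hp).2]
      · exact Finset.sum_congr rfl fun p hp => by rw [(Finset.mem_filter.mp hp).2]
    rw [Finset.sum_congr rfl e1, Finset.sum_add_distrib,
      Finset.sum_fiberwise_of_maps_to (fun p hp => Finset.mem_range.mpr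
        (by have := hPmem p hp; omega)) (fun p => R p * φ ^ (p.1 + p.2)),
      Finset.sum_fiberwise_of_maps_to (fun p hp => Finset.mem_range.mpr
        (by have := hPmem p hp; omega)) (fun p => Q p * φ ^ (p.1 + p.2 + 1)),
      ← Finset.sum_add_distrib]
    have e2 : ∀ p ∈ P,
        R p * φ ^ (p.1 + p.2) + Q p * φ ^ (p.1 + p.2 + 1)
          = (expCoeff φ f p.1 * φ ^ p.1) * (expCoeff φ g p.2 * φ ^ p.2) := by
      intro p _
      have habd := Polynomial.modByMonic_add_div
        (expCoeff φ f p.1 * expCoeff φ g p.2) φ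
      calc R p * φ ^ (p.1 + p.2) + Q p * φ ^ (p.1 + p.2 + 1)
          = (R p + φ * Q p) * φ ^ (p.1 + p.2) := by ring
        _ = (expCoeff φ f p.1 * expCoeff φ g p.2) * φ ^ (p.1 + p.2) := by
            rw [hR, hQ, habd]
        _ = (expCoeff φ f p.1 * φ ^ p.1) * (expCoeff φ g p.2 * φ ^ p.2) := by
            rw [pow_add]; ring
    rw [Finset.sum_congr rfl e2]
    rw [show f * g = (∑ s ∈ Finset.range (Nf + 1), expCoeff φ f s * φ ^ s) *
        (∑ t ∈ Finset.range (Ng + 1), expCoeff φ g t * φ ^ t) from by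
      rw [expansion_sum hm hd f Nf le_rfl, expansion_sum hm hd g Ng le_rfl]]
    rw [Finset.sum_mul_sum, hP, Finset.sum_product]
  -- degrees of the coefficients
  have hRdeg : ∀ p : ℕ × ℕ, (R p).natDegree < φ.natDegree :=
    fun p => natDegree_modByMonic_lt' hm hd _
  have hQdeg : ∀ p : ℕ × ℕ, (Q p).natDegree < φ.natDegree := by
    intro p
    rw [hQ]
    rw [Polynomial.natDegree_divByMonic _ hm]
    have h1 := expCoeff_natDegree_lt hm hd f p.1
    have h2 := expCoeff_natDegree_lt hm hd g p.2
    have := Polynomial.natDegree_mul_le (p := expCoeff φ f p.1) (q := expCoeff φ g p.2)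
    omega
  have hsum_deg : ∀ (s : Finset (ℕ × ℕ)) (F : ℕ × ℕ → Polynomial K),
      (∀ p : ℕ × ℕ, (F p).natDegree < φ.natDegree) →
      (∑ p ∈ s, F p).natDegree < φ.natDegree := by
    intro s F hF
    induction s using Finset.cons_induction with
    | empty => rw [Finset.sum_empty, Polynomial.natDegree_zero]; omega
    | cons a' s' ha' ih =>
      rw [Finset.sum_cons]
      have h1 := Polynomial.natDegree_add_le (F a') (∑ p ∈ s', F p)
      have h2 := hF a'
      omega
  have hcdeg : ∀ k, (c k).natDegree < φ.natDegree := by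
    intro k
    show ((∑ p ∈ P.filter (fun p => p.1 + p.2 = k), R p)
      + ∑ p ∈ P.filter (fun p => p.1 + p.2 + 1 = k), Q p).natDegree < φ.natDegree
    have h1 := hsum_deg (P.filter (fun p => p.1 + p.2 = k)) R hRdeg
    have h2 := hsum_deg (P.filter (fun p => p.1 + p.2 + 1 = k)) Q hQdeg
    have := Polynomial.natDegree_add_le
      (∑ p ∈ P.filter (fun p => p.1 + p.2 = k), R p)
      (∑ p ∈ P.filter (fun p => p.1 + p.2 + 1 = k), Q p)
    omega
  have hcoeff : ∀ k ≤ Nf + Ng + 1, expCoeff φ (f * g) k = c k :=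
    expansion_unique hm hd c (Nf + Ng + 1) hcdeg hrep
  have hNfg : (f * g).natDegree = Nf + Ng := Polynomial.natDegree_mul hf0 hg0
  -- the two inequalities
  have hge : augVal μ φ γ f + augVal μ φ γ g ≤ augVal μ φ γ (f * g) := by
    refine le_augVal hμ hm hd γ fun k hk => ?_
    rw [hcoeff k (by omega), hc]
    refine val_add_const_ge hμ ?_ ?_
    · refine val_sum_const_ge hμ fun p hp => ?_
      obtain ⟨hpP, hpk⟩ := Finset.mem_filter.mp hp
      by_cases hab0 : expCoeff φ f p.1 * expCoeff φ g p.2 = 0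
      · rw [show R p = 0 from by rw [hR]; simp only [hab0, Polynomial.zero_modByMonic],
          val_zero hμ, top_add]
        exact le_top
      · have ha0 := left_ne_zero_of_mul hab0
        have hb0 := right_ne_zero_of_mul hab0
        rw [hR]
        rw [(hA _ _ ha0 hb0 (expCoeff_natDegree_lt hm hd f p.1)
          (expCoeff_natDegree_lt hm hd g p.2)).1]
        rw [← hpk, add_nsmul, add_add_add_comm]
        exact add_le_add (augVal_le_term hμ hm hd γ f p.1)
          (augVal_le_term hμ hm hd γ g p.2)
    · refine val_sum_const_ge hμ fun p hp => ?_
      obtain ⟨hpP, hpk⟩ := Finset.mem_filter.mp hp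
      by_cases hab0 : expCoeff φ f p.1 * expCoeff φ g p.2 = 0
      · rw [show Q p = 0 from by rw [hQ]; simp only [hab0, Polynomial.zero_divByMonic],
          val_zero hμ, top_add]
        exact le_top
      · have ha0 := left_ne_zero_of_mul hab0
        have hb0 := right_ne_zero_of_mul hab0
        have hA2 := (hA _ _ ha0 hb0 (expCoeff_natDegree_lt hm hd f p.1)
          (expCoeff_natDegree_lt hm hd g p.2)).2
        rw [← hpk]
        calc augVal μ φ γ f + augVal μ φ γ g
            ≤ (μ (expCoeff φ f p.1) + p.1 • γ) + (μ (expCoeff φ g p.2) + p.2 • γ) :=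
              add_le_add (augVal_le_term hμ hm hd γ f p.1)
                (augVal_le_term hμ hm hd γ g p.2)
          _ = (μ (expCoeff φ f p.1) + μ (expCoeff φ g p.2)) + (p.1 + p.2) • γ := by
              rw [add_nsmul, add_add_add_comm]
          _ ≤ (μ (Q p) + γ) + (p.1 + p.2) • γ := by
              refine add_le_add_left ?_ _
              rw [hQ]
              exact hA2
          _ = μ (Q p) + (p.1 + p.2 + 1) • γ := by
              rw [succ_nsmul, add_assoc, add_comm γ ((p.1 + p.2) • γ)]
  have hle2 : augVal μ φ γ (f * g) ≤ augVal μ φ γ f + augVal μ φ γ g := by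
    by_cases htop : augVal μ φ γ f + augVal μ φ γ g = ⊤
    · rw [htop]; exact le_top
    obtain ⟨hρf, hρg⟩ := WithTop.add_ne_top.mp htop
    set Sf := (Finset.range (Nf + 1)).filter
      (fun s => μ (expCoeff φ f s) + s • γ = augVal μ φ γ f) with hSf
    have hSfne : Sf.Nonempty := by
      obtain ⟨s, hs, hseq⟩ := augVal_exists_term hμ hm hd γ f
      exact ⟨s, Finset.mem_filter.mpr ⟨Finset.mem_range.mpr (by omega), hseq.symm⟩⟩
    set Sg := (Finset.range (Ng + 1)).filter
      (fun t => μ (expCoeff φ g t) + t • γ = augVal μ φ γ g) with hSg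
    have hSgne : Sg.Nonempty := by
      obtain ⟨t, ht, hteq⟩ := augVal_exists_term hμ hm hd γ g
      exact ⟨t, Finset.mem_filter.mpr ⟨Finset.mem_range.mpr (by omega), hteq.symm⟩⟩
    set s0 := Sf.min' hSfne with hs0def
    set t0 := Sg.min' hSgne with ht0def
    have hs0 : μ (expCoeff φ f s0) + s0 • γ = augVal μ φ γ f :=
      (Finset.mem_filter.mp (Sf.min'_mem hSfne)).2
    have ht0 : μ (expCoeff φ g t0) + t0 • γ = augVal μ φ γ g :=
      (Finset.mem_filter.mp (Sg.min'_mem hSgne)).2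
    have hs0r : s0 ∈ Finset.range (Nf + 1) := (Finset.mem_filter.mp (Sf.min'_mem hSfne)).1
    have ht0r : t0 ∈ Finset.range (Ng + 1) := (Finset.mem_filter.mp (Sg.min'_mem hSgne)).1
    have hs0min : ∀ s, s < s0 → augVal μ φ γ f < μ (expCoeff φ f s) + s • γ := by
      intro s hs
      refine lt_of_le_of_ne (augVal_le_term hμ hm hd γ f s) fun heq => ?_
      have hmem : s ∈ Sf := Finset.mem_filter.mpr
        ⟨Finset.mem_range.mpr (by have := Finset.mem_range.mp hs0r; omega), heq.symm⟩
      have := Sf.min'_le s hmem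
      omega
    have ht0min : ∀ t, t < t0 → augVal μ φ γ g < μ (expCoeff φ g t) + t • γ := by
      intro t ht
      refine lt_of_le_of_ne (augVal_le_term hμ hm hd γ g t) fun heq => ?_
      have hmem : t ∈ Sg := Finset.mem_filter.mpr
        ⟨Finset.mem_range.mpr (by have := Finset.mem_range.mp ht0r; omega), heq.symm⟩
      have := Sg.min'_le t hmem
      omega
    have hμas0 : μ (expCoeff φ f s0) ≠ ⊤ := fun h => hρf (by rw [← hs0, h, top_add])
    have hμbt0 : μ (expCoeff φ g t0) ≠ ⊤ := fun h => hρg (by rw [← ht0, h, top_add])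
    have has0 : expCoeff φ f s0 ≠ 0 := fun h => hμas0 (by rw [h, val_zero hμ])
    have hbt0 : expCoeff φ g t0 ≠ 0 := fun h => hμbt0 (by rw [h, val_zero hμ])
    set w := μ (expCoeff φ f s0) + μ (expCoeff φ g t0) with hw
    have hwne : w ≠ ⊤ := WithTop.add_ne_top.mpr ⟨hμas0, hμbt0⟩
    have hsum_eq : augVal μ φ γ f + augVal μ φ γ g = w + (s0 + t0) • γ := by
      rw [hw, add_nsmul, add_add_add_comm, hs0, ht0]
    have hmainR : μ (R (s0, t0)) = w := by
      rw [hR]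
      exact (hA _ _ has0 hbt0 (expCoeff_natDegree_lt hm hd f s0)
        (expCoeff_natDegree_lt hm hd g t0)).1
    -- strict bounds for the other contributions
    have hRother : ∀ p ∈ (P.filter (fun p => p.1 + p.2 = s0 + t0)).erase (s0, t0),
        w < μ (R p) := by
      intro p hp
      obtain ⟨hpne, hpf⟩ := Finset.mem_erase.mp hp
      obtain ⟨hpP, hpk⟩ := Finset.mem_filter.mp hpf
      by_cases hab0 : expCoeff φ f p.1 * expCoeff φ g p.2 = 0
      · rw [show R p = 0 from by rw [hR]; simp only [hab0, Polynomial.zero_modByMonic],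
          val_zero hμ]
        exact hwne.lt_top
      · have ha0 := left_ne_zero_of_mul hab0
        have hb0 := right_ne_zero_of_mul hab0
        rw [hR, (hA _ _ ha0 hb0 (expCoeff_natDegree_lt hm hd f p.1)
          (expCoeff_natDegree_lt hm hd g p.2)).1]
        have hcases : p.1 < s0 ∨ p.2 < t0 := by
          rcases Nat.lt_or_ge p.1 s0 with h | h
          · exact Or.inl h
          · right
            rcases Nat.lt_or_ge p.2 t0 with h2 | h2
            · exact h2
            · exfalso
              have hp1 : p.1 = s0 := by omega
              have hp2 : p.2 = t0 := by omega
              exact hpne (Prod.ext hp1 hp2)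
        have hstrict : augVal μ φ γ f + augVal μ φ γ g
            < (μ (expCoeff φ f p.1) + p.1 • γ) + (μ (expCoeff φ g p.2) + p.2 • γ) := by
          rcases hcases with h | h
          · exact WithTop.add_lt_add_of_lt_of_le hρg (hs0min p.1 h)
              (augVal_le_term hμ hm hd γ g p.2)
          · exact WithTop.add_lt_add_of_le_of_lt hρf
              (augVal_le_term hμ hm hd γ f p.1) (ht0min p.2 h)
        rw [hsum_eq] at hstrict
        rw [show (μ (expCoeff φ f p.1) + p.1 • γ) + (μ (expCoeff φ g p.2) + p.2 • γ)
            = (μ (expCoeff φ f p.1) + μ (expCoeff φ g p.2)) + (s0 + t0) • γ from by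
          rw [← hpk, add_nsmul, add_add_add_comm]] at hstrict
        exact (WithTop.add_lt_add_iff_right (nsmul_ne_top hγne)).mp hstrict
    have hQother : ∀ p ∈ P.filter (fun p => p.1 + p.2 + 1 = s0 + t0), w < μ (Q p) := by
      intro p hp
      obtain ⟨hpP, hpk⟩ := Finset.mem_filter.mp hp
      by_cases hab0 : expCoeff φ f p.1 * expCoeff φ g p.2 = 0
      · rw [show Q p = 0 from by rw [hQ]; simp only [hab0, Polynomial.zero_divByMonic],
          val_zero hμ]
        exact hwne.lt_top
      · have ha0 := left_ne_zero_of_mul hab0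
        have hb0 := right_ne_zero_of_mul hab0
        have hA2 := (hA _ _ ha0 hb0 (expCoeff_natDegree_lt hm hd f p.1)
          (expCoeff_natDegree_lt hm hd g p.2)).2
        have hcases : p.1 < s0 ∨ p.2 < t0 := by omega
        have hstrict : augVal μ φ γ f + augVal μ φ γ g
            < (μ (expCoeff φ f p.1) + p.1 • γ) + (μ (expCoeff φ g p.2) + p.2 • γ) := by
          rcases hcases with h | h
          · exact WithTop.add_lt_add_of_lt_of_le hρg (hs0min p.1 h)
              (augVal_le_term hμ hm hd γ g p.2)
          · exact WithTop.add_lt_add_of_le_of_lt hρf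
              (augVal_le_term hμ hm hd γ f p.1) (ht0min p.2 h)
        rw [hsum_eq] at hstrict
        rw [show (μ (expCoeff φ f p.1) + p.1 • γ) + (μ (expCoeff φ g p.2) + p.2 • γ)
            = (μ (expCoeff φ f p.1) + μ (expCoeff φ g p.2)) + (p.1 + p.2) • γ from by
          rw [add_nsmul, add_add_add_comm]] at hstrict
        rw [show (s0 + t0) • γ = γ + (p.1 + p.2) • γ from by
          rw [← hpk, succ_nsmul, add_comm]] at hstrict
        rw [← add_assoc] at hstrict
        have h1 : w + γ < μ (expCoeff φ f p.1) + μ (expCoeff φ g p.2) :=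
          (WithTop.add_lt_add_iff_right (nsmul_ne_top hγne)).mp hstrict
        have h2 : w + γ < μ (Q p) + γ := lt_of_lt_of_le h1 (by rw [hQ]; exact hA2)
        exact (WithTop.add_lt_add_iff_right hγne).mp h2
    -- assemble: the coefficient at level s0 + t0 has value exactly w
    have hmem0 : (s0, t0) ∈ P.filter (fun p => p.1 + p.2 = s0 + t0) := by
      refine Finset.mem_filter.mpr ⟨?_, rfl⟩
      rw [hP]
      exact Finset.mem_product.mpr ⟨hs0r, ht0r⟩
    have hsplitc : c (s0 + t0) = R (s0, t0)
        + ((∑ p ∈ (P.filter (fun p => p.1 + p.2 = s0 + t0)).erase (s0, t0), R p)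
           + ∑ p ∈ P.filter (fun p => p.1 + p.2 + 1 = s0 + t0), Q p) := by
      show (∑ p ∈ P.filter (fun p => p.1 + p.2 = s0 + t0), R p)
          + (∑ p ∈ P.filter (fun p => p.1 + p.2 + 1 = s0 + t0), Q p) = _
      rw [← Finset.add_sum_erase _ R hmem0, add_assoc]
    have hZ : w < μ ((∑ p ∈ (P.filter (fun p => p.1 + p.2 = s0 + t0)).erase (s0, t0), R p)
        + ∑ p ∈ P.filter (fun p => p.1 + p.2 + 1 = s0 + t0), Q p) :=
      lt_of_lt_of_le (lt_min (val_sum_gt hμ hwne hRother) (val_sum_gt hμ hwne hQother))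
        (val_min_le hμ _ _)
    have hck0 : μ (c (s0 + t0)) = w := by
      rw [hsplitc, val_add_eq_left hμ (by rw [hmainR]; exact hZ), hmainR]
    have hk0le : s0 + t0 ≤ (f * g).natDegree := by
      rw [hNfg]
      have := Finset.mem_range.mp hs0r
      have := Finset.mem_range.mp ht0r
      omega
    have hfinal := augVal_le_term hμ hm hd γ (f * g) (s0 + t0)
    rw [hcoeff (s0 + t0) (by omega), hck0, ← hsum_eq] at hfinal
    exact hfinal
  exact le_antisymm hle2 hge

end Mul

end MLVAux

namespace MLVAux

set_option linter.unusedSectionVars false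
set_option maxHeartbeats 1000000

open Polynomial Finset

variable {K : Type*} [Field K] {Λ : Type*} [AddCommGroup Λ] [LinearOrder Λ] [IsOrderedAddMonoid Λ]

lemma glb_aux (v : FieldVal K Λ) (μ ν : Polynomial K → WithTop Λ)
    (hμ : IsValT v μ) (hν : IsValT v ν) (φ : Polynomial K) (hmon : φ.Monic)
    (hlt : μ φ < ν φ)
    (hmin : ∀ ψ : Polynomial K, ψ.Monic → μ ψ ≠ ν ψ → φ.natDegree ≤ ψ.natDegree) :
    ∃ ρ : Polynomial K → WithTop Λ, IsValT v ρ ∧ ρ ≤ μ ∧ ρ ≤ ν ∧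
      ∀ ρ' : Polynomial K → WithTop Λ, IsValT v ρ' → ρ' ≤ μ → ρ' ≤ ν → ρ' ≤ ρ := by
  have hd : 1 ≤ φ.natDegree := by
    by_contra hc
    have h0 : φ.natDegree = 0 := by omega
    have h1 : φ = 1 := hmon.natDegree_eq_zero.mp h0
    rw [h1, val_one hμ, val_one hν] at hlt
    exact lt_irrefl _ hlt
  set γ := μ φ with hγdef
  have hγne : γ ≠ ⊤ := hlt.ne_top
  -- agreement below degree d
  have agree : ∀ h : Polynomial K, h.natDegree < φ.natDegree → μ h = ν h := by
    intro h hh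
    by_contra hne
    obtain ⟨ψ, hψm, hψd, hψne⟩ := exists_monic_of_val_ne hμ hν hne
    have := hmin ψ hψm hψne
    omega
  -- Lemma A
  have lemA : ∀ a b : Polynomial K, a ≠ 0 → b ≠ 0 →
      a.natDegree < φ.natDegree → b.natDegree < φ.natDegree →
      μ ((a * b) %ₘ φ) = μ a + μ b ∧ μ a + μ b ≤ μ ((a * b) /ₘ φ) + γ := by
    intro a b ha hb hda hdb
    set q := (a * b) /ₘ φ with hqdef
    set r := (a * b) %ₘ φ with hrdef
    have hab : r + φ * q = a * b := Polynomial.modByMonic_add_div (a * b) φ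
    have hrd : r.natDegree < φ.natDegree := natDegree_modByMonic_lt' hmon hd _
    have hqd : q.natDegree < φ.natDegree := by
      rw [hqdef, Polynomial.natDegree_divByMonic _ hmon]
      have := Polynomial.natDegree_mul_le (p := a) (q := b)
      omega
    clear_value q r
    clear hqdef hrdef
    have hw : μ (a * b) = μ a + μ b := val_mul hμ a b
    have hνab : ν (a * b) = μ a + μ b := by
      rw [val_mul hν, ← agree a hda, ← agree b hdb]
    have hνr : ν r = μ r := (agree _ hrd).symm
    have hμr : μ r = μ a + μ b := by
      rcases lt_trichotomy (μ r) (μ a + μ b) with hcase | hcase | hcase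
      · exfalso
        have hrne : μ r ≠ ⊤ := hcase.ne_top
        have h1 : μ (φ * q) = μ r := by
          rcases lt_trichotomy (μ (φ * q)) (μ r) with h | h | h
          · exfalso
            have he : μ (a * b) = μ (φ * q) := by
              rw [← hab, add_comm, val_add_eq_left hμ h]
            rw [hw] at he
            rw [← he] at h
            exact absurd (h.trans hcase) (lt_irrefl _)
          · exact h
          · exfalso
            have he : μ (a * b) = μ r := by
              rw [← hab, val_add_eq_left hμ h]
            rw [hw] at he
            exact absurd he.symm (ne_of_lt hcase)
        have h2 : ν (φ * q) = μ r := by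
          rcases lt_trichotomy (ν (φ * q)) (ν r) with h | h | h
          · exfalso
            have he : ν (a * b) = ν (φ * q) := by
              rw [← hab, add_comm, val_add_eq_left hν h]
            rw [hνab] at he
            rw [hνr] at h
            rw [← he] at h
            exact absurd (h.trans hcase) (lt_irrefl _)
          · rw [h, hνr]
          · exfalso
            have he : ν (a * b) = ν r := by
              rw [← hab, val_add_eq_left hν h]
            rw [hνab, hνr] at he
            exact absurd he.symm (ne_of_lt hcase)
        rw [val_mul hμ] at h1
        rw [val_mul hν, ← agree _ hqd] at h2
        have hqne : μ q ≠ ⊤ := by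
          intro h0
          rw [h0, add_top] at h1
          exact hrne h1.symm
        have hcancel : μ q + μ φ = μ q + ν φ := by
          rw [add_comm _ (μ φ), add_comm _ (ν φ), h1, h2]
        exact absurd (WithTop.add_left_cancel hqne hcancel) (ne_of_lt hlt)
      · exact hcase
      · exfalso
        have hwne : μ a + μ b ≠ ⊤ := hcase.ne_top
        have h1 : μ (φ * q) = μ a + μ b := by
          rcases lt_trichotomy (μ (φ * q)) (μ a + μ b) with h | h | h
          · exfalso
            have he : μ (a * b) = μ (φ * q) := by
              rw [← hab, add_comm, val_add_eq_left hμ (h.trans hcase)]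
            rw [hw] at he
            exact absurd he.symm (ne_of_lt h)
          · exact h
          · exfalso
            have hmin2 := val_min_le hμ r (φ * q)
            rw [hab, hw] at hmin2
            exact absurd (lt_of_lt_of_le (lt_min hcase h) hmin2) (lt_irrefl _)
        have h2 : ν (φ * q) = μ a + μ b := by
          rcases lt_trichotomy (ν (φ * q)) (μ a + μ b) with h | h | h
          · exfalso
            have he : ν (a * b) = ν (φ * q) := by
              rw [← hab, add_comm, val_add_eq_left hν (by rw [hνr]; exact h.trans hcase)]
            rw [hνab] at he
            exact absurd he.symm (ne_of_lt h)
          · exact h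
          · exfalso
            have hmin2 := val_min_le hν r (φ * q)
            rw [hab, hνab, hνr] at hmin2
            exact absurd (lt_of_lt_of_le (lt_min hcase h) hmin2) (lt_irrefl _)
        rw [val_mul hμ] at h1
        rw [val_mul hν, ← agree _ hqd] at h2
        have hqne : μ q ≠ ⊤ := by
          intro h0
          rw [h0, add_top] at h1
          exact hwne h1.symm
        have hcancel : μ q + μ φ = μ q + ν φ := by
          rw [add_comm _ (μ φ), add_comm _ (ν φ), h1, h2]
        exact absurd (WithTop.add_left_cancel hqne hcancel) (ne_of_lt hlt)
    refine ⟨hμr, ?_⟩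
    have hsub : φ * q = a * b + -r := by
      rw [← hab]; ring
    have hge : min (μ (a * b)) (μ (-r)) ≤ μ (φ * q) := by
      rw [hsub]; exact val_min_le hμ _ _
    rw [val_neg hμ, hμr, hw, min_self, val_mul hμ] at hge
    rw [hγdef, add_comm (μ q) (μ φ)]
    exact hge
  -- the candidate greatest lower bound
  set ρ := augVal μ φ γ with hρdef
  have hρ0 : ρ 0 = ⊤ := augVal_zero hμ hmon hd γ
  have hρbelow : ∀ f : Polynomial K, f.natDegree < φ.natDegree → ρ f = μ f :=
    fun f hf => augVal_of_natDegree_lt hμ hmon hd γ hf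
  have hρ1 : ρ 1 = 0 := by
    rw [hρbelow 1 (by rw [Polynomial.natDegree_one]; omega), val_one hμ]
  have hρC : ∀ a : K, ρ (Polynomial.C a) = v.v a := by
    intro a
    rw [hρbelow _ (by rw [Polynomial.natDegree_C]; omega), val_C hμ]
  have hρadd : ∀ f g : Polynomial K, min (ρ f) (ρ g) ≤ ρ (f + g) := by
    intro f g
    refine le_augVal hμ hmon hd γ fun s hs => ?_
    rw [expCoeff_add hmon hd f g s]
    have h1 := augVal_le_term hμ hmon hd γ f s
    have h2 := augVal_le_term hμ hmon hd γ g s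
    have hmin2 : min (μ (expCoeff φ f s)) (μ (expCoeff φ g s)) + s • γ
        = min (μ (expCoeff φ f s) + s • γ) (μ (expCoeff φ g s) + s • γ) := by
      rcases le_total (μ (expCoeff φ f s)) (μ (expCoeff φ g s)) with h | h
      · rw [min_eq_left h, min_eq_left (add_le_add_left h _)]
      · rw [min_eq_right h, min_eq_right (add_le_add_left h _)]
    calc min (ρ f) (ρ g)
        ≤ min (μ (expCoeff φ f s) + s • γ) (μ (expCoeff φ g s) + s • γ) :=
          le_min ((min_le_left _ _).trans h1) ((min_le_right _ _).trans h2)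
      _ = min (μ (expCoeff φ f s)) (μ (expCoeff φ g s)) + s • γ := hmin2.symm
      _ ≤ μ (expCoeff φ f s + expCoeff φ g s) + s • γ :=
          add_le_add_left (val_min_le hμ _ _) _
  have hρmul : ∀ f g : Polynomial K, ρ (f * g) = ρ f + ρ g :=
    fun f g => augVal_mul hμ hmon hd hγne lemA f g
  have hval : IsValT v ρ := ⟨hρ1, hρ0, hρmul, hρadd, hρC⟩
  have hρμ : ρ ≤ μ := by
    intro f
    conv_rhs => rw [← expansion_sum hmon hd f f.natDegree le_rfl]
    refine val_sum_ge hμ fun s hs => ?_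
    rw [val_mul hμ, val_pow hμ, ← hγdef]
    exact augVal_le_term hμ hmon hd γ f s
  have hρν : ρ ≤ ν := by
    intro f
    conv_rhs => rw [← expansion_sum hmon hd f f.natDegree le_rfl]
    refine val_sum_ge hν fun s hs => ?_
    rw [val_mul hν, val_pow hν, ← agree _ (expCoeff_natDegree_lt hmon hd f s)]
    exact (augVal_le_term hμ hmon hd γ f s).trans
      (add_le_add_right (nsmul_mono hlt.le s) _)
  refine ⟨ρ, hval, hρμ, hρν, ?_⟩
  -- maximality
  intro ρ' hρ' h1' h2'
  by_cases hC : ∃ ψ : Polynomial K, ψ.Monic ∧ ψ.natDegree < φ.natDegree ∧ ρ' ψ < μ ψ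
  · -- case (c): ρ' drops below μ already in degree < d
    obtain ⟨ψ0, hψ0m, hψ0d, hψ0lt⟩ := hC
    have hAne : {n : ℕ | ∃ ψ : Polynomial K, ψ.Monic ∧ ψ.natDegree = n ∧ ρ' ψ < μ ψ}.Nonempty :=
      ⟨ψ0.natDegree, ψ0, hψ0m, rfl, hψ0lt⟩
    obtain ⟨φ', hφ'm, hφ'd, hφ'lt⟩ := Nat.sInf_mem hAne
    have hd'le : sInf {n : ℕ | ∃ ψ : Polynomial K, ψ.Monic ∧ ψ.natDegree = n ∧ ρ' ψ < μ ψ}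
        ≤ ψ0.natDegree := Nat.sInf_le ⟨ψ0, hψ0m, rfl, hψ0lt⟩
    have hd'lt : φ'.natDegree < φ.natDegree := by omega
    have hd'1 : 1 ≤ φ'.natDegree := by
      by_contra hc
      have h0 : φ'.natDegree = 0 := by omega
      have h1 : φ' = 1 := hφ'm.natDegree_eq_zero.mp h0
      rw [h1, val_one hρ', val_one hμ] at hφ'lt
      exact lt_irrefl _ hφ'lt
    have agree' : ∀ h : Polynomial K, h.natDegree < φ'.natDegree → ρ' h = μ h := by
      intro h hh
      rcases eq_or_lt_of_le (h1' h) with he | hlt2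
      · exact he
      · exfalso
        obtain ⟨ψ, hψm, hψd, hψne⟩ := exists_monic_of_val_ne hρ' hμ (ne_of_lt hlt2)
        have hmem : ψ.natDegree
            ∈ {n : ℕ | ∃ ψ : Polynomial K, ψ.Monic ∧ ψ.natDegree = n ∧ ρ' ψ < μ ψ} :=
          ⟨ψ, hψm, rfl, lt_of_le_of_ne (h1' ψ) hψne⟩
        have := Nat.sInf_le hmem
        omega
    have hL := lemL hμ hρ' hφ'm hd'1 agree' hφ'lt h1'
    intro f
    have hfs := expansion_sum hφ'm hd'1 f f.natDegree le_rfl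
    calc ρ' f
        ≤ ρ (∑ t ∈ Finset.range (f.natDegree + 1), expCoeff φ' f t * φ' ^ t) := by
          refine val_sum_ge hval fun t ht => ?_
          rw [val_mul hval, val_pow hval,
            hρbelow _ (lt_trans (expCoeff_natDegree_lt hφ'm hd'1 f t) hd'lt),
            hρbelow φ' hd'lt]
          exact (hL f t).trans (add_le_add_right (nsmul_mono (h1' φ') t) _)
      _ = ρ f := by rw [hfs]
  · -- cases (a)/(b): ρ' agrees with μ below degree d
    push_neg at hC
    have agreeμ : ∀ h : Polynomial K, h.natDegree < φ.natDegree → ρ' h = μ h := by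
      intro h hh
      rcases eq_or_lt_of_le (h1' h) with he | hlt2
      · exact he
      · exfalso
        obtain ⟨ψ, hψm, hψd, hψne⟩ := exists_monic_of_val_ne hρ' hμ (ne_of_lt hlt2)
        exact absurd (hC ψ hψm (by omega)) (not_le.mpr (lt_of_le_of_ne (h1' ψ) hψne))
    rcases lt_or_eq_of_le (h1' φ) with hβlt | hβeq
    · -- case (b): ρ' φ < γ
      have hL := lemL hμ hρ' hmon hd agreeμ hβlt h1'
      intro f
      refine le_augVal hμ hmon hd γ fun s hs => ?_
      exact (hL f s).trans (add_le_add_right (nsmul_mono (h1' φ) s) _)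
    · -- case (a): ρ' φ = γ, use ν to compute ρ'
      have agreeν : ∀ h : Polynomial K, h.natDegree < φ.natDegree → ρ' h = ν h :=
        fun h hh => (agreeμ h hh).trans (agree h hh)
      have hβν : ρ' φ < ν φ := by rw [hβeq]; exact hlt
      have hL := lemL hν hρ' hmon hd agreeν hβν h2'
      intro f
      refine le_augVal hμ hmon hd γ fun s hs => ?_
      rw [agree _ (expCoeff_natDegree_lt hmon hd f s), hγdef, ← hβeq]
      exact hL f s

end MLVAux

open MLV

/-- Any two valuations in `T` have a greatest common lower node `μ ∧ ν` in `T`. -/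
theorem statement_17 {K : Type*} [Field K] {Λ : Type*} [AddCommGroup Λ] [LinearOrder Λ] [IsOrderedAddMonoid Λ]
    (v : FieldVal K Λ) (μ ν : Polynomial K → WithTop Λ)
    (hμ : IsValT v μ) (hν : IsValT v ν) :
    ∃ ρ : Polynomial K → WithTop Λ, IsValT v ρ ∧ ρ ≤ μ ∧ ρ ≤ ν ∧
      ∀ ρ' : Polynomial K → WithTop Λ, IsValT v ρ' → ρ' ≤ μ → ρ' ≤ ν → ρ' ≤ ρ := by
  by_cases h1 : μ ≤ ν
  · exact ⟨μ, hμ, le_refl μ, h1, fun ρ' _ h _ => h⟩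
  by_cases h2 : ν ≤ μ
  · exact ⟨ν, hν, h2, le_refl ν, fun ρ' _ _ h => h⟩
  -- the incomparable case
  obtain ⟨f, hf⟩ : ∃ f : Polynomial K, ¬ μ f ≤ ν f := by
    by_contra hc
    push_neg at hc
    exact h1 fun f => hc f
  have hfne : μ f ≠ ν f := fun h => hf (le_of_eq h)
  obtain ⟨ψ0, hψ0m, _, hψ0ne⟩ := MLVAux.exists_monic_of_val_ne hμ hν hfne
  have hSne : {n : ℕ | ∃ ψ : Polynomial K, ψ.Monic ∧ ψ.natDegree = n ∧ μ ψ ≠ ν ψ}.Nonempty :=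
    ⟨ψ0.natDegree, ψ0, hψ0m, rfl, hψ0ne⟩
  obtain ⟨φ0, hφ0m, hφ0d, hφ0ne⟩ := Nat.sInf_mem hSne
  have hmin : ∀ ψ : Polynomial K, ψ.Monic → μ ψ ≠ ν ψ → φ0.natDegree ≤ ψ.natDegree := by
    intro ψ hψm hψne
    have := Nat.sInf_le (show ψ.natDegree ∈
      {n : ℕ | ∃ ψ : Polynomial K, ψ.Monic ∧ ψ.natDegree = n ∧ μ ψ ≠ ν ψ} from
      ⟨ψ, hψm, rfl, hψne⟩)
    omega
  rcases hφ0ne.lt_or_gt with hl | hl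
  · exact MLVAux.glb_aux v μ ν hμ hν φ0 hφ0m hl hmin
  · obtain ⟨ρ, hval, hνle, hμle, hmax⟩ := MLVAux.glb_aux v ν μ hν hμ φ0 hφ0m hl
      (fun ψ hψ hne => hmin ψ hψ hne.symm)
    exact ⟨ρ, hval, hμle, hνle, fun ρ' h a b => hmax ρ' h b a⟩
end

section
/- Let μ, ν ∈ T be two inner nodes. Then μ ∼ ν (μ and ν are equivalent valuations) if and only if the following three conditions hold: (a) μ and ν admit a common key polynomial φ ∈ KP(μ) ∩ KP(ν) which is of minimal degree both in KP(μ) and in KP(ν); (b) for all a ∈ K[x] with deg(a) < deg(μ), μ(a) = ν(a); (c) sv(μ) ∼_sme sv(ν). Moreover, in this case KP(μ) = KP(ν). -/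
open Polynomial

open MLV

namespace MLVAux

open Polynomial MLV

variable {K : Type*} [Field K] {Λ : Type*} [AddCommGroup Λ] [LinearOrder Λ] [IsOrderedAddMonoid Λ]
variable {v : FieldVal K Λ} {μ : Polynomial K → WithTop Λ}

section Basic

lemma mu_one (h : IsValT v μ) : μ 1 = 0 := h.1
lemma mu_zero (h : IsValT v μ) : μ 0 = ⊤ := h.2.1
lemma mu_mul (h : IsValT v μ) (f g : Polynomial K) : μ (f * g) = μ f + μ g := h.2.2.1 f g
lemma mu_min (h : IsValT v μ) (f g : Polynomial K) : min (μ f) (μ g) ≤ μ (f + g) :=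
  h.2.2.2.1 f g
lemma mu_C (h : IsValT v μ) (a : K) : μ (C a) = v.v a := h.2.2.2.2 a

lemma mu_neg_one (h : IsValT v μ) : μ (-1) = 0 := by
  have h2 : μ (-1) + μ (-1) = 0 := by
    rw [← mu_mul h]; norm_num; exact mu_one h
  have hne : μ (-1 : Polynomial K) ≠ ⊤ := by
    intro hc; rw [hc, top_add] at h2
    exact absurd h2.symm (by simp)
  obtain ⟨x, htop⟩ := WithTop.ne_top_iff_exists.mp hne
  rw [← htop] at h2
  have hx : x + x = 0 := by exact_mod_cast h2
  have hx0 : x = 0 := by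
    rcases lt_trichotomy x 0 with hc | hc | hc
    · exact absurd hx (by have := add_lt_add hc hc; simp only [add_zero] at this; exact ne_of_lt this)
    · exact hc
    · exact absurd hx (by have := add_lt_add hc hc; simp only [add_zero] at this; exact (ne_of_lt this).symm)
  rw [← htop, hx0]; exact_mod_cast rfl

lemma mu_neg (h : IsValT v μ) (f : Polynomial K) : μ (-f) = μ f := by
  have : (-f : Polynomial K) = -1 * f := by ring
  rw [this, mu_mul h, mu_neg_one h, zero_add]

lemma mu_add_lt (h : IsValT v μ) {f g : Polynomial K} (hlt : μ f < μ g) :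
    μ (f + g) = μ f := by
  apply le_antisymm
  · by_contra hc
    push_neg at hc
    have h1 : μ f = μ (f + g + -g) := by ring_nf
    have h2 : min (μ (f + g)) (μ (-g)) ≤ μ (f + g + -g) := mu_min h _ _
    rw [← h1, mu_neg h] at h2
    rcases min_le_iff.mp h2 with h3 | h3
    · exact absurd h3 (not_le.mpr hc)
    · exact absurd h3 (not_le.mpr hlt)
  · have := mu_min h f g
    rwa [min_eq_left hlt.le] at this

lemma mu_add_ne (h : IsValT v μ) {f g : Polynomial K} (hne : μ f ≠ μ g) :
    μ (f + g) = min (μ f) (μ g) := by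
  rcases hne.lt_or_gt with hc | hc
  · rw [mu_add_lt h hc, min_eq_left hc.le]
  · rw [add_comm, mu_add_lt h hc, min_eq_right hc.le]

lemma inf_attain (s : Finset ℕ) (f : ℕ → WithTop Λ) (h : s.inf f ≠ ⊤) :
    ∃ i ∈ s, f i = s.inf f := by
  rcases s.eq_empty_or_nonempty with rfl | hne
  · simp at h
  · obtain ⟨i, hi, hfi⟩ := Finset.exists_mem_eq_inf' hne f
    rw [Finset.inf'_eq_inf] at hfi
    exact ⟨i, hi, hfi.symm⟩

lemma mu_sum (h : IsValT v μ) (s : Finset ℕ) (t : ℕ → Polynomial K)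
    (hd : ∀ i ∈ s, ∀ j ∈ s, i ≠ j → μ (t i) = μ (t j) → μ (t i) = ⊤) :
    μ (∑ i ∈ s, t i) = s.inf (fun i => μ (t i)) := by
  induction s using Finset.induction_on with
  | empty => simp [mu_zero h]
  | @insert a s ha ih =>
    rw [Finset.sum_insert ha, Finset.inf_insert]
    have ih' : μ (∑ i ∈ s, t i) = s.inf (fun i => μ (t i)) := by
      apply ih
      intro i hi j hj hij
      exact hd i (Finset.mem_insert_of_mem hi) j (Finset.mem_insert_of_mem hj) hij
    rcases lt_trichotomy (μ (t a)) (s.inf fun i => μ (t i)) with hc | hc | hc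
    · rw [mu_add_lt h (by rw [ih']; exact hc)]
      exact (min_eq_left hc.le).symm
    · by_cases htop : μ (t a) = ⊤
      · rw [htop] at hc
        have hall : μ (∑ i ∈ s, t i) = ⊤ := by rw [ih', ← hc]
        have hmin := mu_min h (t a) (∑ i ∈ s, t i)
        rw [htop, hall] at hmin
        simp only [min_self, top_le_iff] at hmin
        rw [hmin, ← hc, htop]; simp
      · exfalso
        obtain ⟨j, hj, hfj⟩ := inf_attain s (fun i => μ (t i)) (by rw [← hc]; exact htop)
        have hja : a ≠ j := by rintro rfl; exact ha hj
        have heq : μ (t a) = μ (t j) := by rw [hfj, ← hc]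
        exact htop (hd a (Finset.mem_insert_self a s) j (Finset.mem_insert_of_mem hj) hja heq)
    · rw [add_comm, mu_add_lt h (by rw [ih']; exact hc)]
      rw [ih']
      exact (min_eq_right hc.le).symm

lemma mu_pow (h : IsValT v μ) (a : Polynomial K) (n : ℕ) : μ (a ^ n) = n • μ a := by
  induction n with
  | zero => simp [mu_one h]
  | succ n ih => rw [pow_succ, mu_mul h, ih, succ_nsmul]

end Basic

section Expansion

lemma inf_range_succ' (N : ℕ) (g : ℕ → WithTop Λ) :
    (Finset.range (N+1)).inf g = g 0 ⊓ (Finset.range N).inf (fun j => g (j+1)) := by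
  induction N with
  | zero => simp
  | succ N ih =>
    rw [Finset.range_add_one, Finset.inf_insert, ih, Finset.range_add_one, Finset.inf_insert]
    exact inf_left_comm _ _ _

lemma add_inf (s : Finset ℕ) (g : ℕ → WithTop Λ) (a : WithTop Λ) :
    a + s.inf g = s.inf (fun j => a + g j) := by
  induction s using Finset.induction_on with
  | empty => simp
  | @insert i s hi ih =>
    rw [Finset.inf_insert, Finset.inf_insert, ← ih]
    rcases le_total (g i) (s.inf g) with hc | hc
    · rw [inf_eq_left.mpr hc, inf_eq_left.mpr (add_le_add_right hc a)]
    · rw [inf_eq_right.mpr hc, inf_eq_right.mpr (add_le_add_right hc a)]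

lemma exists_expansion {a : Polynomial K} (ha : a.Monic) (hd : 0 < a.natDegree)
    (f : Polynomial K) :
    ∃ (N : ℕ) (c : ℕ → Polynomial K), (∀ j, (c j).natDegree < a.natDegree) ∧
      (∀ j, N ≤ j → c j = 0) ∧ f = ∑ j ∈ Finset.range N, c j * a ^ j := by
  suffices H : ∀ (n : ℕ) (f : Polynomial K), f.natDegree ≤ n →
      ∃ (N : ℕ) (c : ℕ → Polynomial K), (∀ j, (c j).natDegree < a.natDegree) ∧
        (∀ j, N ≤ j → c j = 0) ∧ f = ∑ j ∈ Finset.range N, c j * a ^ j from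
    H f.natDegree f le_rfl
  intro n
  induction n using Nat.strong_induction_on with
  | _ n ih =>
    intro f hf
    by_cases hsmall : f.natDegree < a.natDegree
    · refine ⟨1, fun j => if j = 0 then f else 0, ?_, ?_, ?_⟩
      · intro j; by_cases hj : j = 0 <;> simp [hj, hsmall, hd]
      · intro j hj
        have : j ≠ 0 := by omega
        simp [this]
      · simp
    · push_neg at hsmall
      have hn1 : 1 ≤ n := le_trans (le_trans hd hsmall) hf
      have hq : (f /ₘ a).natDegree = f.natDegree - a.natDegree := natDegree_divByMonic f ha
      have hqlt : (f /ₘ a).natDegree < n := by omega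
      obtain ⟨N, c, hc, hvan, hsum⟩ := ih (f /ₘ a).natDegree hqlt (f /ₘ a) le_rfl
      refine ⟨N + 1, fun j => if j = 0 then f %ₘ a else c (j - 1), ?_, ?_, ?_⟩
      · intro j
        by_cases hj : j = 0
        · simp only [hj, if_pos]
          by_cases hr : f %ₘ a = 0
          · simp [hr, hd]
          · exact natDegree_lt_natDegree hr (degree_modByMonic_lt f ha)
        · simpa [hj] using hc (j-1)
      · intro j hj
        have hj0 : j ≠ 0 := by omega
        simp only [hj0, if_false]
        exact hvan (j-1) (by omega)
      · rw [Finset.sum_range_succ']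
        simp only [if_pos rfl, pow_zero, mul_one, Nat.succ_ne_zero, if_false,
          Nat.add_sub_cancel]
        have hcongr : ∀ j ∈ Finset.range N, c j * a ^ (j+1) = (c j * a ^ j) * a := by
          intro j _; rw [pow_succ, mul_assoc]
        rw [Finset.sum_congr rfl hcongr, ← Finset.sum_mul, ← hsum, add_comm, mul_comm]
        exact (modByMonic_add_div f a).symm

/-- The fundamental expansion theorem: for a `μ`-minimal `φ`, any `φ`-expansion with
small coefficients computes `μ`. -/
lemma mu_expansion_min (h : IsValT v μ) {φ : Polynomial K}
    (hmin : IsMuMinimal μ φ) (hφ0 : φ ≠ 0) (N : ℕ) (c : ℕ → Polynomial K)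
    (hc : ∀ j, (c j).natDegree < φ.natDegree) :
    μ (∑ j ∈ Finset.range N, c j * φ ^ j)
      = (Finset.range N).inf (fun j => μ (c j) + j • μ φ) := by
  induction N generalizing c with
  | zero => simp [mu_zero h]
  | succ N ih =>
    set q := ∑ j ∈ Finset.range N, c (j+1) * φ ^ j with hqdef
    have hsum : ∑ j ∈ Finset.range (N+1), c j * φ ^ j = c 0 + q * φ := by
      rw [Finset.sum_range_succ']
      simp only [pow_zero, mul_one]
      rw [add_comm]; congr 1
      rw [Finset.sum_mul]; apply Finset.sum_congr rfl; intro j _; rw [pow_succ]; ring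
    have hqval : μ q = (Finset.range N).inf fun j => μ (c (j+1)) + j • μ φ :=
      ih _ (fun j => hc (j+1))
    have hkey : μ (c 0 + q * φ) = min (μ (c 0)) (μ (q * φ)) := by
      by_cases hne : μ (c 0) = μ (q * φ)
      · rw [← hne, min_self]
        apply le_antisymm ?main ?ge
        case ge => have := mu_min h (c 0) (q * φ); rwa [← hne, min_self] at this
        case main =>
          by_contra hgt; push_neg at hgt
          have hc0top : μ (c 0) ≠ ⊤ := fun hcc => by rw [hcc] at hgt; exact not_top_lt hgt
          have hc0 : c 0 ≠ 0 := fun hcc => by rw [hcc, mu_zero h] at hc0top; exact hc0top rfl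
          refine hmin.2 (c 0) hc0 (degree_lt_degree (hc 0)) ⟨-q, ?_⟩
          unfold MuEquiv
          have heq : c 0 - (-q) * φ = c 0 + q * φ := by ring
          rw [heq]; exact hgt
      · exact mu_add_ne h hne
    rw [hsum, hkey, mu_mul h, inf_range_succ']
    congr 1
    · simp
    · rw [hqval, add_comm, add_inf]
      apply Finset.inf_congr rfl
      intro j _
      rw [succ_nsmul]
      abel

end Expansion

section KeyPols

lemma minKeyPol_exists (hin : IsInnerNode μ) :
    ∃ φ : Polynomial K, IsMinKeyPol μ φ ∧ φ.natDegree = degOf μ := by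
  obtain ⟨ψ, hψ⟩ := hin
  have hne : {n : ℕ | ∃ φ : Polynomial K, IsKeyPol μ φ ∧ φ.natDegree = n}.Nonempty :=
    ⟨ψ.natDegree, ψ, hψ, rfl⟩
  obtain ⟨φ₀, hk, hdeg⟩ := Nat.sInf_mem hne
  refine ⟨φ₀, ⟨hk, ?_⟩, hdeg⟩
  intro ψ' hψ'
  rw [hdeg]
  exact Nat.sInf_le ⟨ψ', hψ', rfl⟩

lemma degOf_eq {φ : Polynomial K} (hmk : IsMinKeyPol μ φ) : degOf μ = φ.natDegree := by
  have hmem : φ.natDegree ∈ {n : ℕ | ∃ ψ : Polynomial K, IsKeyPol μ ψ ∧ ψ.natDegree = n} :=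
    ⟨φ, hmk.1, rfl⟩
  apply le_antisymm (Nat.sInf_le hmem)
  obtain ⟨φ₀, h₀, hd⟩ := minKeyPol_exists ⟨φ, hmk.1⟩
  calc φ.natDegree ≤ φ₀.natDegree := hmk.2 φ₀ h₀.1
  _ = degOf μ := hd

lemma keyPol_monic {φ : Polynomial K} (hk : IsKeyPol μ φ) : φ.Monic := hk.1
lemma keyPol_minimal {φ : Polynomial K} (hk : IsKeyPol μ φ) : IsMuMinimal μ φ := hk.2.1
lemma keyPol_ne_top {φ : Polynomial K} (hk : IsKeyPol μ φ) : μ φ ≠ ⊤ := hk.2.2.1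
lemma keyPol_pos_deg {φ : Polynomial K} (hk : IsKeyPol μ φ) : 0 < φ.natDegree := hk.2.1.1

lemma degOf_pos (hin : IsInnerNode μ) : 0 < degOf μ := by
  obtain ⟨φ₀, h₀, hd⟩ := minKeyPol_exists hin
  rw [← hd]; exact keyPol_pos_deg h₀.1

private lemma minKeyPol_val_eq_aux (h : IsValT v μ) {φ ψ : Polynomial K}
    (hφ : IsMinKeyPol μ φ) (hψ : IsMinKeyPol μ ψ) (hlt : μ φ < μ ψ) : False := by
  have hnedeg : φ.natDegree = ψ.natDegree :=
    le_antisymm (hφ.2 ψ hψ.1) (hψ.2 φ hφ.1)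
  have hnephi : φ ≠ ψ := fun hcc => by rw [hcc] at hlt; exact lt_irrefl _ hlt
  have hsub : φ - ψ ≠ 0 := sub_ne_zero.mpr hnephi
  have hdeglt : (φ - ψ).degree < φ.degree := by
    apply degree_sub_lt ?_ hφ.1.1.ne_zero (by rw [hφ.1.1.leadingCoeff, hψ.1.1.leadingCoeff])
    rw [degree_eq_natDegree hφ.1.1.ne_zero, degree_eq_natDegree hψ.1.1.ne_zero, hnedeg]
  have hval : μ (φ - ψ) = μ φ := by
    have : φ - ψ = φ + -ψ := by ring
    rw [this, mu_add_ne h (by rw [mu_neg h]; exact hlt.ne), mu_neg h, min_eq_left hlt.le]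
  apply hφ.1.2.1.2 (φ - ψ) hsub hdeglt
  refine ⟨1, ?_⟩
  unfold MuEquiv
  rw [one_mul, hval]
  have : φ - ψ - φ = -ψ := by ring
  rw [this, mu_neg h]
  exact hlt

lemma minKeyPol_val_eq (h : IsValT v μ) {φ ψ : Polynomial K}
    (hφ : IsMinKeyPol μ φ) (hψ : IsMinKeyPol μ ψ) : μ φ = μ ψ := by
  rcases lt_trichotomy (μ φ) (μ ψ) with hc | hc | hc
  · exact absurd hc (fun hc => minKeyPol_val_eq_aux h hφ hψ hc)
  · exact hc
  · exact absurd hc (fun hc => minKeyPol_val_eq_aux h hψ hφ hc)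

end KeyPols

section Torsion

/-- The subgroup of elements of `Λ` torsion over `Γ = v(K^*)`. -/
def torHull (v : FieldVal K Λ) : AddSubgroup Λ where
  carrier := {x : Λ | ∃ n : ℤ, n ≠ 0 ∧ n • x ∈ baseGroup v}
  zero_mem' := ⟨1, one_ne_zero, by simpa using (baseGroup v).zero_mem⟩
  add_mem' := by
    rintro x y ⟨m, hm, hmx⟩ ⟨n, hn, hny⟩
    refine ⟨m * n, mul_ne_zero hm hn, ?_⟩
    have hexp : (m * n) • (x + y) = n • (m • x) + m • (n • y) := by
      rw [smul_add, mul_comm m n, mul_smul, mul_comm n m, mul_smul]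
    rw [hexp]
    exact add_mem (AddSubgroup.zsmul_mem _ hmx n) (AddSubgroup.zsmul_mem _ hny m)
  neg_mem' := by
    rintro x ⟨m, hm, hmx⟩
    exact ⟨m, hm, by rw [smul_neg]; exact neg_mem hmx⟩

lemma base_le_torHull : baseGroup v ≤ torHull v :=
  fun x hx => ⟨1, one_ne_zero, by simpa using hx⟩

lemma val_C_mem (c : K) (hc : c ≠ 0) :
    ∃ x : Λ, v.v c = (x : WithTop Λ) ∧ x ∈ baseGroup v := by
  obtain ⟨x, hx⟩ := WithTop.ne_top_iff_exists.mp (v.ne_top' c hc)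
  exact ⟨x, hx.symm, AddSubgroup.subset_closure ⟨c, hx.symm⟩⟩

lemma zsmul_not_mem_torHull {δ : Λ} (hδ : δ ∉ torHull v) {k : ℤ} (hk : k ≠ 0) :
    k • δ ∉ torHull v := by
  rintro ⟨n, hn, hmem⟩
  rw [← mul_smul] at hmem
  exact hδ ⟨n * k, mul_ne_zero hn hk, hmem⟩

end Torsion

section CosetVal

variable {a : Polynomial K} {δ : Λ}

/-- In the presence of a non-torsion value `δ = μ(a)` with all smaller-degree values
torsion, expansions in powers of `a` compute `μ` (all terms lie in distinct cosets). -/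
lemma mu_expansion_coset (h : IsValT v μ)
    (hδeq : μ a = (δ : WithTop Λ))
    (hδtor : δ ∉ torHull v)
    (hsmall : ∀ g : Polynomial K, g.natDegree < a.natDegree →
      μ g = ⊤ ∨ ∃ x ∈ torHull v, μ g = (x : WithTop Λ))
    (N : ℕ) (c : ℕ → Polynomial K) (hc : ∀ j, (c j).natDegree < a.natDegree) :
    μ (∑ j ∈ Finset.range N, c j * a ^ j)
      = (Finset.range N).inf (fun j => μ (c j) + j • μ a) := by
  have hterm : ∀ j : ℕ, μ (c j * a ^ j) = μ (c j) + j • μ a := fun j => by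
    rw [mu_mul h, mu_pow h]
  have hd : ∀ i ∈ Finset.range N, ∀ j ∈ Finset.range N, i ≠ j →
      μ (c i * a ^ i) = μ (c j * a ^ j) → μ (c i * a ^ i) = ⊤ := by
    intro i _ j _ hij heq
    by_contra htop
    rw [hterm i] at htop heq; rw [hterm j] at heq
    have hcitop : μ (c i) ≠ ⊤ := fun hcc => htop (by rw [hcc, top_add])
    have hcjtop : μ (c j) ≠ ⊤ := by
      intro hcc; rw [hcc, top_add] at heq; exact htop heq
    obtain ⟨xi, hxi, hxieq⟩ := (hsmall (c i) (hc i)).resolve_left hcitop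
    obtain ⟨xj, hxj, hxjeq⟩ := (hsmall (c j) (hc j)).resolve_left hcjtop
    rw [hxieq, hxjeq, hδeq] at heq
    have heq' : xi + i • δ = xj + j • δ := by exact_mod_cast heq
    have hz : ((i : ℤ) - j) • δ = xj - xi := by
      rw [sub_smul, natCast_zsmul, natCast_zsmul, sub_eq_sub_iff_add_eq_add, add_comm]
      exact heq'
    have hij' : (i : ℤ) - j ≠ 0 := by
      intro hcc
      exact hij (by exact_mod_cast sub_eq_zero.mp hcc)
    exact zsmul_not_mem_torHull hδtor hij' (hz ▸ sub_mem hxj hxi)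
  have hsum := mu_sum h (Finset.range N) (fun j => c j * a ^ j) hd
  rw [hsum]
  exact Finset.inf_congr rfl (fun j _ => hterm j)

/-- Construction of a `μ`-divisor witness from the expansion. -/
lemma muDvd_of_val_ne (h : IsValT v μ)
    (hδeq : μ a = (δ : WithTop Λ)) (hδtor : δ ∉ torHull v)
    (hsmall : ∀ g : Polynomial K, g.natDegree < a.natDegree →
      μ g = ⊤ ∨ ∃ x ∈ torHull v, μ g = (x : WithTop Λ))
    {g : Polynomial K} (N : ℕ) (c : ℕ → Polynomial K)
    (hc : ∀ j, (c j).natDegree < a.natDegree) (hvan : ∀ j, N ≤ j → c j = 0)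
    (hrep : g = ∑ j ∈ Finset.range N, c j * a ^ j)
    (hne : μ g ≠ μ (c 0)) : MuDvd μ a g := by
  refine ⟨∑ j ∈ Finset.range N, c (j + 1) * a ^ j, ?_⟩
  unfold MuEquiv
  have hsub : g - (∑ j ∈ Finset.range N, c (j + 1) * a ^ j) * a = c 0 := by
    have h1 : g = ∑ j ∈ Finset.range (N + 1), c j * a ^ j := by
      rw [Finset.sum_range_succ, hvan N le_rfl, zero_mul, add_zero, hrep]
    rw [h1, Finset.sum_range_succ', pow_zero, mul_one, Finset.sum_mul]
    have h2 : ∀ j ∈ Finset.range N, c (j+1) * a ^ (j+1) = c (j+1) * a ^ j * a := by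
      intro j _; rw [pow_succ, mul_assoc]
    rw [Finset.sum_congr rfl h2]
    ring
  rw [hsub]
  have hval : μ g = (Finset.range N).inf (fun j => μ (c j) + j • μ a) := by
    rw [hrep]; exact mu_expansion_coset h hδeq hδtor hsmall N c hc
  have hN : 0 < N := by
    rcases Nat.eq_zero_or_pos N with rfl | hN
    · exfalso
      apply hne
      rw [hvan 0 le_rfl, hrep]
      simp
    · exact hN
  have hle : μ g ≤ μ (c 0) := by
    rw [hval]
    have := Finset.inf_le (f := fun j => μ (c j) + j • μ a) (Finset.mem_range.mpr hN)
    simpa using this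
  exact lt_of_le_of_ne hle hne

lemma val_eq_of_not_muDvd (h : IsValT v μ)
    (hδeq : μ a = (δ : WithTop Λ)) (hδtor : δ ∉ torHull v)
    (hsmall : ∀ g : Polynomial K, g.natDegree < a.natDegree →
      μ g = ⊤ ∨ ∃ x ∈ torHull v, μ g = (x : WithTop Λ))
    {g : Polynomial K} (N : ℕ) (c : ℕ → Polynomial K)
    (hc : ∀ j, (c j).natDegree < a.natDegree) (hvan : ∀ j, N ≤ j → c j = 0)
    (hrep : g = ∑ j ∈ Finset.range N, c j * a ^ j)
    (hnd : ¬ MuDvd μ a g) : μ g = μ (c 0) := by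
  by_contra hne
  exact hnd (muDvd_of_val_ne h hδeq hδtor hsmall N c hc hvan hrep hne)

end CosetVal

section MainStructural

variable {a : Polynomial K} {δ : Λ}

lemma expansion_pad {a : Polynomial K} {N M : ℕ} (hNM : N ≤ M) (c : ℕ → Polynomial K)
    (hvan : ∀ j, N ≤ j → c j = 0) :
    ∑ j ∈ Finset.range N, c j * a ^ j = ∑ j ∈ Finset.range M, c j * a ^ j :=
  Finset.sum_subset (Finset.range_subset_range.mpr hNM)
    (fun x _ hnx => by rw [hvan x (by simpa using hnx), zero_mul])

lemma isKeyPol_of_nontorsion (h : IsValT v μ)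
    (hamonic : a.Monic) (hade : 0 < a.natDegree)
    (hδeq : μ a = (δ : WithTop Λ)) (hδtor : δ ∉ torHull v)
    (hsmall : ∀ g : Polynomial K, g.natDegree < a.natDegree →
      μ g = ⊤ ∨ ∃ x ∈ torHull v, μ g = (x : WithTop Λ)) :
    IsKeyPol μ a := by
  refine ⟨hamonic, ⟨hade, ?min⟩, hδeq ▸ WithTop.coe_ne_top, ?unit, ?split⟩
  case min =>
    rintro f hf0 hfdeg ⟨q, hq⟩
    unfold MuEquiv at hq
    obtain ⟨M, cq, hcq, hvq, hqrep⟩ := exists_expansion hamonic hade q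
    set e : ℕ → Polynomial K := fun j => if j = 0 then f else -(cq (j-1)) with he
    have hesmall : ∀ j, (e j).natDegree < a.natDegree := by
      intro j
      by_cases hj : j = 0
      · simpa [he, hj] using natDegree_lt_natDegree hf0 hfdeg
      · simpa [he, hj, natDegree_neg] using hcq (j-1)
    have herep : f - q * a = ∑ j ∈ Finset.range (M + 1), e j * a ^ j := by
      rw [Finset.sum_range_succ']
      simp only [he, Nat.succ_ne_zero, if_false, if_pos rfl, pow_zero, mul_one,
        Nat.add_sub_cancel]
      have hqa : q * a = ∑ j ∈ Finset.range M, cq j * a ^ (j+1) := by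
        rw [hqrep, Finset.sum_mul]
        exact Finset.sum_congr rfl (fun j _ => by rw [pow_succ, mul_assoc])
      rw [hqa]
      have hneg : ∀ j ∈ Finset.range M, -cq j * a ^ (j+1) = -(cq j * a ^ (j+1)) :=
        fun j _ => by ring
      rw [Finset.sum_congr rfl hneg, Finset.sum_neg_distrib]
      ring
    have hle : μ (f - q * a) ≤ μ f := by
      rw [herep, mu_expansion_coset h hδeq hδtor hsmall _ e hesmall]
      have h0 := Finset.inf_le (f := fun j => μ (e j) + j • μ a)
        (Finset.mem_range.mpr (Nat.succ_pos M))
      simpa [he] using h0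
    exact absurd hq (not_lt.mpr hle)
  case unit =>
    rintro ⟨f, hf⟩
    unfold MuEquiv at hf
    obtain ⟨M, c, hc, hvan, hrep⟩ := exists_expansion hamonic hade f
    set X := (Finset.range M).inf (fun j => μ (c j) + (j+1) • μ a) with hX
    have hfa : μ (f * a) = X := by
      rw [mu_mul h, hrep, mu_expansion_coset h hδeq hδtor hsmall _ c hc, add_comm, add_inf]
      exact Finset.inf_congr rfl (fun j _ => by rw [succ_nsmul]; abel)
    set e : ℕ → Polynomial K := fun j => if j = 0 then -1 else c (j-1) with he
    have hesmall : ∀ j, (e j).natDegree < a.natDegree := by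
      intro j
      by_cases hj : j = 0
      · simpa [he, hj] using hade
      · simpa [he, hj] using hc (j-1)
    have herep : f * a - 1 = ∑ j ∈ Finset.range (M + 1), e j * a ^ j := by
      rw [Finset.sum_range_succ']
      simp only [he, Nat.succ_ne_zero, if_false, if_pos rfl, pow_zero, mul_one,
        Nat.add_sub_cancel]
      have hfa2 : f * a = ∑ j ∈ Finset.range M, c j * a ^ (j+1) := by
        rw [hrep, Finset.sum_mul]
        exact Finset.sum_congr rfl (fun j _ => by rw [pow_succ, mul_assoc])
      rw [hfa2]
      ring
    have hval : μ (f * a - 1) = (0 : WithTop Λ) ⊓ X := by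
      rw [herep, mu_expansion_coset h hδeq hδtor hsmall _ e hesmall, inf_range_succ']
      have h1 : μ (e 0) + 0 • μ a = 0 := by simp [he, mu_neg_one h]
      have h2 : (Finset.range M).inf (fun j => μ (e (j+1)) + (j+1) • μ a) = X :=
        Finset.inf_congr rfl (fun j _ => by simp [he])
      rw [h1, h2]
    rw [hval, hfa] at hf
    exact absurd hf (not_lt.mpr inf_le_right)
  case split =>
    rintro f g ⟨q, hq⟩
    unfold MuEquiv at hq
    by_contra hcon
    push_neg at hcon
    obtain ⟨hnf, hng⟩ := hcon
    have hfgtop : μ (f * g) ≠ ⊤ := ne_top_of_lt hq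
    have hftop : μ f ≠ ⊤ := by
      intro hcc; rw [mu_mul h, hcc, top_add] at hfgtop; exact hfgtop rfl
    have hgtop : μ g ≠ ⊤ := by
      intro hcc; rw [mu_mul h, hcc, add_top] at hfgtop; exact hfgtop rfl
    obtain ⟨Mf, cf, hcf, hvf, hfrep⟩ := exists_expansion hamonic hade f
    obtain ⟨Mg, cg, hcg, hvg, hgrep⟩ := exists_expansion hamonic hade g
    obtain ⟨Mp, cp, hcp, hvp, hprep⟩ := exists_expansion hamonic hade (f * g)
    obtain ⟨Mq, cq, hcq, hvq, hqrep⟩ := exists_expansion hamonic hade q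
    have hfval : μ f = μ (cf 0) := val_eq_of_not_muDvd h hδeq hδtor hsmall Mf cf hcf hvf hfrep hnf
    have hgval : μ g = μ (cg 0) := val_eq_of_not_muDvd h hδeq hδtor hsmall Mg cg hcg hvg hgrep hng
    obtain ⟨xf, hxf, hxfeq⟩ := (hsmall (cf 0) (hcf 0)).resolve_left (hfval ▸ hftop)
    obtain ⟨xg, hxg, hxgeq⟩ := (hsmall (cg 0) (hcg 0)).resolve_left (hgval ▸ hgtop)
    -- combined representation of f*g - q*a
    set L := max Mp (Mq + 1) with hL
    set cs : ℕ → Polynomial K := fun j => if j = 0 then 0 else cq (j-1) with hcs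
    have hcssmall : ∀ j, (cs j).natDegree < a.natDegree := by
      intro j
      by_cases hj : j = 0
      · simpa [hcs, hj] using hade
      · simpa [hcs, hj] using hcq (j-1)
    have hqa : q * a = ∑ j ∈ Finset.range L, cs j * a ^ j := by
      rw [← expansion_pad (le_max_right Mp (Mq+1)) cs ?van]
      case van =>
        intro j hj
        have hj0 : j ≠ 0 := by omega
        simp only [hcs, hj0, if_false]
        exact hvq (j-1) (by omega)
      rw [Finset.sum_range_succ']
      simp only [hcs, Nat.succ_ne_zero, if_false, if_pos rfl, zero_mul, add_zero,
        Nat.add_sub_cancel]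
      rw [hqrep, Finset.sum_mul]
      exact Finset.sum_congr rfl (fun j _ => by rw [pow_succ, mul_assoc])
    have hfgrep : f * g = ∑ j ∈ Finset.range L, cp j * a ^ j := by
      rw [hprep]; exact expansion_pad (le_max_left Mp (Mq+1)) cp hvp
    set e : ℕ → Polynomial K := fun j => cp j - cs j with he
    have hesmall : ∀ j, (e j).natDegree < a.natDegree := fun j =>
      lt_of_le_of_lt (natDegree_sub_le _ _) (max_lt (hcp j) (hcssmall j))
    have herep : f * g - q * a = ∑ j ∈ Finset.range L, e j * a ^ j := by
      rw [hfgrep, hqa, ← Finset.sum_sub_distrib]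
      exact Finset.sum_congr rfl (fun j _ => by rw [he]; ring)
    -- value of f*g - q*a is at most μ (cp 0)
    have hle : μ (f * g - q * a) ≤ μ (cp 0) := by
      rw [herep, mu_expansion_coset h hδeq hδtor hsmall _ e hesmall]
      have h0 := Finset.inf_le (f := fun j => μ (e j) + j • μ a)
        (Finset.mem_range.mpr (lt_of_lt_of_le (Nat.succ_pos Mq) (le_max_right Mp (Mq+1))))
      simpa [he, hcs] using h0
    have hne0 : μ (f * g) ≠ μ (cp 0) := fun hcc =>
      absurd hq (not_lt.mpr (hcc ▸ hle))
    -- the μ-value of f*g is attained at some positive index of its expansion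
    have hfgval : μ (f * g) = (Finset.range Mp).inf (fun j => μ (cp j) + j • μ a) := by
      rw [hprep] at hfgtop ⊢
      exact mu_expansion_coset h hδeq hδtor hsmall _ cp hcp
    obtain ⟨j₀, hj₀mem, hj₀⟩ := inf_attain (Finset.range Mp) _ (hfgval ▸ hfgtop)
    have hj₀val : μ (f * g) = μ (cp j₀) + j₀ • μ a := by rw [hfgval, ← hj₀]
    have hj₀pos : j₀ ≠ 0 := by
      intro hcc
      apply hne0
      rw [hj₀val, hcc, zero_nsmul, add_zero]
    have hcptop : μ (cp j₀) ≠ ⊤ := by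
      intro hcc; rw [hj₀val, hcc, top_add] at hfgtop; exact hfgtop rfl
    obtain ⟨xp, hxp, hxpeq⟩ := (hsmall (cp j₀) (hcp j₀)).resolve_left hcptop
    -- derive torsion contradiction
    have hfg2 : μ (f * g) = ((xf + xg : Λ) : WithTop Λ) := by
      rw [mu_mul h, hfval, hgval, hxfeq, hxgeq, WithTop.coe_add]
    have hfg3 : μ (f * g) = ((xp + j₀ • δ : Λ) : WithTop Λ) := by
      rw [hj₀val, hxpeq, hδeq]
      exact_mod_cast rfl
    have heq : xf + xg = xp + j₀ • δ := by
      rw [hfg2] at hfg3; exact_mod_cast hfg3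
    have hz : ((j₀ : ℤ)) • δ = xf + xg - xp := by
      rw [natCast_zsmul, eq_sub_iff_add_eq, add_comm, heq]
    exact zsmul_not_mem_torHull hδtor (by exact_mod_cast hj₀pos)
      (hz ▸ sub_mem (add_mem hxf hxg) hxp)

/-- Values of polynomials of degree less than `deg μ` are torsion over `Γ`. -/
lemma small_val_torsion (h : IsValT v μ) (hin : IsInnerNode μ) :
    ∀ g : Polynomial K, g.natDegree < degOf μ →
      μ g = ⊤ ∨ ∃ x ∈ torHull v, μ g = (x : WithTop Λ) := by
  by_contra hcon
  push_neg at hcon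
  obtain ⟨g₁, hg₁deg, hg₁top, hg₁tor⟩ := hcon
  set D := {n : ℕ | ∃ g : Polynomial K, g.natDegree = n ∧ μ g ≠ ⊤ ∧
    ∀ x ∈ torHull v, μ g ≠ (x : WithTop Λ)} with hD
  have hmem₁ : g₁.natDegree ∈ D := ⟨g₁, rfl, hg₁top, hg₁tor⟩
  have hDne : D.Nonempty := ⟨g₁.natDegree, hmem₁⟩
  obtain ⟨g₀, hg₀deg, hg₀top, hg₀tor⟩ := Nat.sInf_mem hDne
  set d := sInf D with hd
  have hdlt : d < degOf μ := lt_of_le_of_lt (Nat.sInf_le hmem₁) hg₁deg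
  have hsmall : ∀ gg : Polynomial K, gg.natDegree < d →
      μ gg = ⊤ ∨ ∃ x ∈ torHull v, μ gg = (x : WithTop Λ) := by
    intro gg hgg
    by_contra hbad
    push_neg at hbad
    have hmem₂ : gg.natDegree ∈ D := ⟨gg, rfl, hbad.1, hbad.2⟩
    exact absurd (Nat.sInf_le hmem₂) (not_le.mpr hgg)
  have hd1 : 1 ≤ d := by
    by_contra hd0
    push_neg at hd0
    have hd0' : g₀.natDegree = 0 := by omega
    obtain ⟨cc, hcc⟩ := natDegree_eq_zero.mp hd0'
    by_cases hcz : cc = 0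
    · apply hg₀top
      rw [← hcc, hcz, Polynomial.C_0, mu_zero h]
    · obtain ⟨x, hx, hxm⟩ := val_C_mem (v := v) cc hcz
      exact hg₀tor x (base_le_torHull hxm) (by rw [← hcc, mu_C h, hx])
  have hg₀ne : g₀ ≠ 0 := fun hz => hg₀top (by rw [hz, mu_zero h])
  have hlcne : g₀.leadingCoeff ≠ 0 := leadingCoeff_ne_zero.mpr hg₀ne
  set a := g₀ * C (g₀.leadingCoeff)⁻¹ with ha
  have hamonic : a.Monic := monic_mul_leadingCoeff_inv hg₀ne
  have hadeg : a.natDegree = d := by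
    rw [← hg₀deg]
    exact natDegree_eq_of_degree_eq (degree_mul_leadingCoeff_inv g₀ hg₀ne)
  obtain ⟨w, hw, hwm⟩ := val_C_mem (v := v) (g₀.leadingCoeff)⁻¹ (inv_ne_zero hlcne)
  have hatop : μ a ≠ ⊤ := by
    rw [ha, mu_mul h, mu_C h, hw]
    exact WithTop.add_ne_top.mpr ⟨hg₀top, WithTop.coe_ne_top⟩
  obtain ⟨δ, hδeq'⟩ := WithTop.ne_top_iff_exists.mp hatop
  have hδeq : μ a = (δ : WithTop Λ) := hδeq'.symm
  have hδtor : δ ∉ torHull v := by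
    intro hmem
    obtain ⟨y, hy⟩ := WithTop.ne_top_iff_exists.mp hg₀top
    have h1 : μ a = μ g₀ + ↑w := by rw [ha, mu_mul h, mu_C h, hw]
    rw [hδeq, ← hy] at h1
    have h2 : δ = y + w := by exact_mod_cast h1
    have hytor : y ∈ torHull v := by
      have : y = δ - w := by rw [h2]; abel
      rw [this]
      exact sub_mem hmem (base_le_torHull hwm)
    exact hg₀tor y hytor hy.symm
  have hkey : IsKeyPol μ a :=
    isKeyPol_of_nontorsion h hamonic (by omega) hδeq hδtor
      (by rw [hadeg]; exact hsmall)
  have : degOf μ ≤ d := by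
    have hmem : a.natDegree ∈ {n : ℕ | ∃ φ : Polynomial K, IsKeyPol μ φ ∧ φ.natDegree = n} :=
      ⟨a, hkey, rfl⟩
    have := Nat.sInf_le hmem
    rwa [hadeg] at this
  omega

end MainStructural

section Transfer

variable {μ ν : Polynomial K → WithTop Λ}

lemma valEquiv_le_iff (hE : ValEquiv μ ν) (f g : Polynomial K) :
    μ f ≤ μ g ↔ ν f ≤ ν g := by
  obtain ⟨ι, hmono, htop, heq⟩ := hE
  have hstrict : StrictMono ι := hmono.strictMono_of_injective ι.injective
  by_cases hf : μ f = ⊤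
  · have hf' : ν f = ⊤ := (htop f).mp hf
    constructor
    · intro hle
      have hg : μ g = ⊤ := top_le_iff.mp (hf ▸ hle)
      rw [hf', (htop g).mp hg]
    · intro hle
      have hg : ν g = ⊤ := top_le_iff.mp (hf' ▸ hle)
      rw [hf, (htop g).mpr hg]
  · obtain ⟨x, hx'⟩ := WithTop.ne_top_iff_exists.mp hf
    have hx : μ f = (x : WithTop Λ) := hx'.symm
    have hfν := heq f x hx
    by_cases hg : μ g = ⊤
    · have hg' : ν g = ⊤ := (htop g).mp hg
      rw [hg, hg']
      simp
    · obtain ⟨y, hy'⟩ := WithTop.ne_top_iff_exists.mp hg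
      have hy : μ g = (y : WithTop Λ) := hy'.symm
      have hgν := heq g y hy
      rw [hx, hy, hfν, hgν, WithTop.coe_le_coe, WithTop.coe_le_coe]
      constructor
      · intro hxy
        exact Subtype.coe_le_coe.mpr (hmono (Subtype.mk_le_mk.mpr hxy))
      · intro hxy
        exact Subtype.mk_le_mk.mp (hstrict.le_iff_le.mp (Subtype.coe_le_coe.mp hxy))

lemma valEquiv_lt_iff (hE : ValEquiv μ ν) (f g : Polynomial K) :
    μ f < μ g ↔ ν f < ν g := by
  rw [lt_iff_not_ge, lt_iff_not_ge]
  exact not_congr (valEquiv_le_iff hE g f)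

lemma valEquiv_top_iff (hE : ValEquiv μ ν) (f : Polynomial K) : μ f = ⊤ ↔ ν f = ⊤ := by
  obtain ⟨ι, _, htop, _⟩ := hE
  exact htop f

lemma valEquiv_keyPol_iff (hE : ValEquiv μ ν) (φ : Polynomial K) :
    IsKeyPol μ φ ↔ IsKeyPol ν φ := by
  have hme : ∀ g h', MuEquiv μ g h' ↔ MuEquiv ν g h' := fun g h' => valEquiv_lt_iff hE _ _
  have hdvd : ∀ h' g, MuDvd μ h' g ↔ MuDvd ν h' g := fun h' g =>
    exists_congr (fun f => hme _ _)
  constructor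
  · rintro ⟨hm, ⟨hd0, hmin⟩, ht, hu, hs⟩
    exact ⟨hm, ⟨hd0, fun f hf hdeg hD => hmin f hf hdeg ((hdvd _ _).mpr hD)⟩,
      fun hc => ht ((valEquiv_top_iff hE φ).mpr hc),
      fun ⟨f, hf⟩ => hu ⟨f, (hme _ _).mpr hf⟩,
      fun f g hD => (hs f g ((hdvd _ _).mpr hD)).imp ((hdvd _ _).mp) ((hdvd _ _).mp)⟩
  · rintro ⟨hm, ⟨hd0, hmin⟩, ht, hu, hs⟩
    exact ⟨hm, ⟨hd0, fun f hf hdeg hD => hmin f hf hdeg ((hdvd _ _).mp hD)⟩,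
      fun hc => ht ((valEquiv_top_iff hE φ).mp hc),
      fun ⟨f, hf⟩ => hu ⟨f, (hme _ _).mp hf⟩,
      fun f g hD => (hs f g ((hdvd _ _).mp hD)).imp ((hdvd _ _).mpr) ((hdvd _ _).mpr)⟩

lemma valEquiv_minKeyPol_iff (hE : ValEquiv μ ν) (φ : Polynomial K) :
    IsMinKeyPol μ φ ↔ IsMinKeyPol ν φ := by
  unfold IsMinKeyPol
  rw [valEquiv_keyPol_iff hE]
  exact and_congr Iff.rfl
    (forall_congr' fun ψ => imp_congr (valEquiv_keyPol_iff hE ψ) Iff.rfl)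

lemma valEquiv_degOf_eq (hE : ValEquiv μ ν) : degOf μ = degOf ν := by
  unfold degOf
  congr 1
  ext n
  exact exists_congr fun φ => and_congr_left' (valEquiv_keyPol_iff hE φ)

end Transfer

section GroupFix

lemma fix_gamma_closure {A B : AddSubgroup Λ} (ι : A ≃+ B) (hsub : baseGroup v ≤ A)
    (hfix : ∀ (x : Λ) (hx : x ∈ gammaSet v),
      (ι ⟨x, hsub (AddSubgroup.subset_closure hx)⟩ : Λ) = x) :
    ∀ (x : Λ) (hx : x ∈ baseGroup v), (ι ⟨x, hsub hx⟩ : Λ) = x := by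
  intro x hx
  induction hx using AddSubgroup.closure_induction with
  | mem y hy => exact hfix y hy
  | zero =>
    have h0 : (⟨0, hsub (zero_mem _)⟩ : A) = 0 := rfl
    rw [h0, map_zero]; rfl
  | add y z hy hz py pz =>
    have hadd : (⟨y + z, hsub (add_mem hy hz)⟩ : A) =
        ⟨y, hsub hy⟩ + ⟨z, hsub hz⟩ := rfl
    rw [hadd, map_add, AddSubgroup.coe_add, py, pz]
  | neg y hy py =>
    have hneg : (⟨-y, hsub (neg_mem hy)⟩ : A) = -⟨y, hsub hy⟩ := rfl
    rw [hneg, map_neg, AddSubgroup.coe_neg, py]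

lemma fix_torsion {A B : AddSubgroup Λ} (ι : A ≃+ B) (hsub : baseGroup v ≤ A)
    (hfix : ∀ (x : Λ) (hx : x ∈ gammaSet v),
      (ι ⟨x, hsub (AddSubgroup.subset_closure hx)⟩ : Λ) = x)
    {x : Λ} (hxt : x ∈ torHull v) (hxA : x ∈ A) :
    (ι ⟨x, hxA⟩ : Λ) = x := by
  obtain ⟨n, hn, hmem⟩ := hxt
  have h1 : (ι ⟨n • x, hsub hmem⟩ : Λ) = n • x := fix_gamma_closure ι hsub hfix _ hmem
  have h2 : (⟨n • x, hsub hmem⟩ : A) = n • (⟨x, hxA⟩ : A) := rfl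
  rw [h2, map_zsmul] at h1
  exact zsmul_right_injective hn h1

end GroupFix

section Restrict

lemma restrict_addEquiv {A B S T : AddSubgroup Λ} (ι : A ≃+ B)
    (hSA : S ≤ A) (hTB : T ≤ B)
    (hST : ∀ x (hx : x ∈ S), (ι ⟨x, hSA hx⟩ : Λ) ∈ T)
    (hTS : ∀ y (hy : y ∈ T), (ι.symm ⟨y, hTB hy⟩ : Λ) ∈ S) :
    ∃ E : S ≃+ T, ∀ (x : Λ) (hx : x ∈ S), (E ⟨x, hx⟩ : Λ) = (ι ⟨x, hSA hx⟩ : Λ) := by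
  refine ⟨{ toFun := fun x => ⟨(ι ⟨x.1, hSA x.2⟩ : Λ), hST x.1 x.2⟩
            invFun := fun y => ⟨(ι.symm ⟨y.1, hTB y.2⟩ : Λ), hTS y.1 y.2⟩
            left_inv := ?_
            right_inv := ?_
            map_add' := ?_ }, fun x hx => rfl⟩
  · intro x
    apply Subtype.ext
    show (ι.symm ⟨(ι ⟨x.1, hSA x.2⟩ : Λ), _⟩ : Λ) = x.1
    have h1 : (⟨(ι ⟨x.1, hSA x.2⟩ : Λ), hTB (hST x.1 x.2)⟩ : B) = ι ⟨x.1, hSA x.2⟩ := rfl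
    rw [h1, AddEquiv.symm_apply_apply]
  · intro y
    apply Subtype.ext
    show (ι ⟨(ι.symm ⟨y.1, hTB y.2⟩ : Λ), _⟩ : Λ) = y.1
    have h1 : (⟨(ι.symm ⟨y.1, hTB y.2⟩ : Λ), hSA (hTS y.1 y.2)⟩ : A) =
      ι.symm ⟨y.1, hTB y.2⟩ := rfl
    rw [h1, AddEquiv.apply_symm_apply]
  · intro x y
    apply Subtype.ext
    show (ι ⟨x.1 + y.1, _⟩ : Λ) = (ι ⟨x.1, hSA x.2⟩ : Λ) + (ι ⟨y.1, hSA y.2⟩ : Λ)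
    have h1 : (⟨x.1 + y.1, hSA (add_mem x.2 y.2)⟩ : A) = ⟨x.1, hSA x.2⟩ + ⟨y.1, hSA y.2⟩ := rfl
    rw [h1, map_add, AddSubgroup.coe_add]

end Restrict

section Forward

variable {μ ν : Polynomial K → WithTop Λ}

lemma gammaSet_sub_valGroup (hμ : IsValT v μ) : gammaSet v ⊆ (valGroup μ : Set Λ) := by
  rintro x ⟨c, hc⟩
  exact AddSubgroup.subset_closure ⟨C c, by rw [mu_C hμ, hc]⟩

lemma base_le_valGroup (hμ : IsValT v μ) : baseGroup v ≤ valGroup μ :=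
  (AddSubgroup.closure_le _).mpr (gammaSet_sub_valGroup hμ)

lemma symm_monotone {A B : AddSubgroup Λ} {ι : A ≃+ B} (hmono : Monotone ι) :
    Monotone ι.symm := by
  have hstrict : StrictMono ι := hmono.strictMono_of_injective ι.injective
  intro a b hab
  by_contra hcc
  push_neg at hcc
  have := hstrict hcc
  rw [AddEquiv.apply_symm_apply, AddEquiv.apply_symm_apply] at this
  exact absurd hab (not_le.mpr this)

lemma forward_dir (hμ : IsValT v μ) (hν : IsValT v ν) (hinμ : IsInnerNode μ)
    (hE : ValEquiv μ ν) :
    (∃ φ : Polynomial K, IsMinKeyPol μ φ ∧ IsMinKeyPol ν φ) ∧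
    (∀ a : Polynomial K, a.natDegree < degOf μ → μ a = ν a) ∧
    ∃ (φ ψ : Polynomial K) (β γ : Λ), IsMinKeyPol μ φ ∧ IsMinKeyPol ν ψ ∧
      μ φ = (β : WithTop Λ) ∧ ν ψ = (γ : WithTop Λ) ∧ SmeEquiv v β γ := by
  obtain ⟨φ, hφmk, hφdeg⟩ := minKeyPol_exists hinμ
  have hφν : IsMinKeyPol ν φ := (valEquiv_minKeyPol_iff hE φ).mp hφmk
  obtain ⟨ι, hmono, htop, heq⟩ := hE
  have hsub : baseGroup v ≤ valGroup μ := base_le_valGroup hμ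
  have hsubν : baseGroup v ≤ valGroup ν := base_le_valGroup hν
  -- ι fixes Γ
  have hfixγ : ∀ (x : Λ) (hx : x ∈ gammaSet v),
      (ι ⟨x, hsub (AddSubgroup.subset_closure hx)⟩ : Λ) = x := by
    rintro x ⟨c, hc⟩
    have hmC : μ (C c) = (x : WithTop Λ) := by rw [mu_C hμ, hc]
    have h1 := heq (C c) x hmC
    have h2 : ν (C c) = (x : WithTop Λ) := by rw [mu_C hν, hc]
    rw [h2] at h1
    exact (WithTop.coe_inj.mp h1).symm
  refine ⟨⟨φ, hφmk, hφν⟩, ?condb, ?condc⟩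
  case condb =>
    intro a ha
    rcases small_val_torsion hμ hinμ a ha with htop' | ⟨x, hxt, hxeq⟩
    · rw [htop', (htop a).mp htop']
    · have hxA : x ∈ valGroup μ := AddSubgroup.subset_closure ⟨a, hxeq⟩
      have h1 := heq a x hxeq
      rw [fix_torsion ι hsub hfixγ hxt hxA] at h1
      rw [hxeq, h1]
  case condc =>
    obtain ⟨β, hβ'⟩ := WithTop.ne_top_iff_exists.mp (keyPol_ne_top hφmk.1)
    obtain ⟨γ, hγ'⟩ := WithTop.ne_top_iff_exists.mp (keyPol_ne_top hφν.1)
    have hβ : μ φ = (β : WithTop Λ) := hβ'.symm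
    have hγ : ν φ = (γ : WithTop Λ) := hγ'.symm
    have hβA : β ∈ valGroup μ := AddSubgroup.subset_closure ⟨φ, hβ⟩
    have hβval : (ι ⟨β, hβA⟩ : Λ) = γ := by
      have h1 := heq φ β hβ
      rw [hγ] at h1
      exact (WithTop.coe_inj.mp h1).symm
    have hγB : γ ∈ valGroup ν := AddSubgroup.subset_closure ⟨φ, hγ⟩
    have hγval : (ι.symm ⟨γ, hγB⟩ : Λ) = β := by
      have h1 : ι ⟨β, hβA⟩ = ⟨γ, hγB⟩ := Subtype.ext hβval
      rw [← h1, AddEquiv.symm_apply_apply]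
    -- ι.symm fixes Γ
    have hfixγs : ∀ (x : Λ) (hx : x ∈ gammaSet v),
        (ι.symm ⟨x, hsubν (AddSubgroup.subset_closure hx)⟩ : Λ) = x := by
      intro x hx
      have h1 : ι ⟨x, hsub (AddSubgroup.subset_closure hx)⟩
          = ⟨x, hsubν (AddSubgroup.subset_closure hx)⟩ := Subtype.ext (hfixγ x hx)
      rw [← h1, AddEquiv.symm_apply_apply]
    set Sβ := AddSubgroup.closure (gammaSet v ∪ {β}) with hSβ
    set Sγ := AddSubgroup.closure (gammaSet v ∪ {γ}) with hSγ
    have hSA : Sβ ≤ valGroup μ := by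
      apply (AddSubgroup.closure_le _).mpr
      apply Set.union_subset (gammaSet_sub_valGroup hμ)
      intro y hy
      rw [Set.mem_singleton_iff.mp hy]
      exact hβA
    have hTB : Sγ ≤ valGroup ν := by
      apply (AddSubgroup.closure_le _).mpr
      apply Set.union_subset (gammaSet_sub_valGroup hν)
      intro y hy
      rw [Set.mem_singleton_iff.mp hy]
      exact hγB
    have hST : ∀ x (hx : x ∈ Sβ), (ι ⟨x, hSA hx⟩ : Λ) ∈ Sγ := by
      intro x hx
      induction hx using AddSubgroup.closure_induction with
      | mem y hy =>
        rcases hy with hy | hy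
        · show (ι ⟨y, hsub (AddSubgroup.subset_closure hy)⟩ : Λ) ∈ Sγ
          rw [hfixγ y hy]
          exact AddSubgroup.subset_closure (Set.mem_union_left _ hy)
        · have hyβ : y = β := hy
          subst hyβ
          show (ι ⟨y, hβA⟩ : Λ) ∈ Sγ
          rw [hβval]
          exact AddSubgroup.subset_closure (Set.mem_union_right _ rfl)
      | zero =>
        show (ι (0 : valGroup μ) : Λ) ∈ Sγ
        rw [map_zero]
        simpa using zero_mem Sγ
      | add y z hy hz py pz =>
        show (ι (⟨y, hSA hy⟩ + ⟨z, hSA hz⟩ : valGroup μ) : Λ) ∈ Sγ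
        rw [map_add, AddSubgroup.coe_add]
        exact add_mem py pz
      | neg y hy py =>
        show (ι (-⟨y, hSA hy⟩ : valGroup μ) : Λ) ∈ Sγ
        rw [map_neg, AddSubgroup.coe_neg]
        exact neg_mem py
    have hTS : ∀ y (hy : y ∈ Sγ), (ι.symm ⟨y, hTB hy⟩ : Λ) ∈ Sβ := by
      intro x hx
      induction hx using AddSubgroup.closure_induction with
      | mem y hy =>
        rcases hy with hy | hy
        · show (ι.symm ⟨y, hsubν (AddSubgroup.subset_closure hy)⟩ : Λ) ∈ Sβ
          rw [hfixγs y hy]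
          exact AddSubgroup.subset_closure (Set.mem_union_left _ hy)
        · have hyγ : y = γ := hy
          subst hyγ
          show (ι.symm ⟨y, hγB⟩ : Λ) ∈ Sβ
          rw [hγval]
          exact AddSubgroup.subset_closure (Set.mem_union_right _ rfl)
      | zero =>
        show (ι.symm (0 : valGroup ν) : Λ) ∈ Sβ
        rw [map_zero]
        simpa using zero_mem Sβ
      | add y z hy hz py pz =>
        show (ι.symm (⟨y, hTB hy⟩ + ⟨z, hTB hz⟩ : valGroup ν) : Λ) ∈ Sβ
        rw [map_add, AddSubgroup.coe_add]
        exact add_mem py pz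
      | neg y hy py =>
        show (ι.symm (-⟨y, hTB hy⟩ : valGroup ν) : Λ) ∈ Sβ
        rw [map_neg, AddSubgroup.coe_neg]
        exact neg_mem py
    obtain ⟨E, hEval⟩ := restrict_addEquiv ι hSA hTB hST hTS
    refine ⟨φ, φ, β, γ, hφmk, hφν, hβ, hγ, E, ?mono, ?fix, ?map⟩
    case mono =>
      intro x y hxy
      have e1 : (E x : Λ) = (ι ⟨x.1, hSA x.2⟩ : Λ) := hEval x.1 x.2
      have e2 : (E y : Λ) = (ι ⟨y.1, hSA y.2⟩ : Λ) := hEval y.1 y.2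
      rw [← Subtype.coe_le_coe, e1, e2]
      exact Subtype.coe_le_coe.mpr
        (hmono (Subtype.mk_le_mk.mpr (Subtype.coe_le_coe.mpr hxy)))
    case fix =>
      intro aΛ ha
      exact (hEval aΛ _).trans (hfixγ aΛ ha)
    case map =>
      exact (hEval β _).trans hβval

end Forward

section Backward

lemma addcmp (x y ω : Λ) (k l : ℤ) : x + k • ω ≤ y + l • ω ↔ (k - l) • ω ≤ y - x := by
  rw [sub_smul, sub_le_sub_iff, add_comm x (k • ω)]

lemma addeq (x y ω : Λ) (k l : ℤ) : x + k • ω = y + l • ω ↔ (k - l) • ω = y - x := by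
  rw [sub_smul, sub_eq_sub_iff_add_eq_add, add_comm x (k • ω)]

lemma sme_cmp {β γ : Λ}
    (ι₀ : (AddSubgroup.closure (gammaSet v ∪ {β}) : AddSubgroup Λ) ≃+
      (AddSubgroup.closure (gammaSet v ∪ {γ}) : AddSubgroup Λ))
    (hmono₀ : Monotone ι₀)
    (hfix₀ : ∀ (a : Λ) (ha : a ∈ gammaSet v),
      ((ι₀ ⟨a, AddSubgroup.subset_closure (Set.mem_union_left _ ha)⟩ : Λ) = a))
    (hmap₀ : ((ι₀ ⟨β, AddSubgroup.subset_closure (Set.mem_union_right _ rfl)⟩ : Λ) = γ))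
    (k : ℤ) {x : Λ} (hx : x ∈ torHull v) :
    (k • β ≤ x ↔ k • γ ≤ x) ∧ (x ≤ k • β ↔ x ≤ k • γ) := by
  have hβS : β ∈ AddSubgroup.closure (gammaSet v ∪ {β}) :=
    AddSubgroup.subset_closure (Set.mem_union_right _ rfl)
  have hmap₀' : (ι₀ ⟨β, hβS⟩ : Λ) = γ := hmap₀
  have hsubβ : baseGroup v ≤ AddSubgroup.closure (gammaSet v ∪ {β}) :=
    AddSubgroup.closure_mono Set.subset_union_left
  have hfixΓ : ∀ (y : Λ) (hy : y ∈ baseGroup v), (ι₀ ⟨y, hsubβ hy⟩ : Λ) = y :=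
    fix_gamma_closure ι₀ hsubβ (fun y hy => hfix₀ y hy)
  have hstrict₀ : StrictMono ι₀ := hmono₀.strictMono_of_injective ι₀.injective
  have hle_iff : ∀ (p q : Λ) (hp : p ∈ AddSubgroup.closure (gammaSet v ∪ {β}))
      (hq : q ∈ AddSubgroup.closure (gammaSet v ∪ {β})),
      p ≤ q ↔ (ι₀ ⟨p, hp⟩ : Λ) ≤ (ι₀ ⟨q, hq⟩ : Λ) := by
    intro p q hp hq
    constructor
    · intro h
      exact Subtype.coe_le_coe.mpr (hmono₀ (Subtype.mk_le_mk.mpr h))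
    · intro h
      exact Subtype.mk_le_mk.mp (hstrict₀.le_iff_le.mp (Subtype.coe_le_coe.mp h))
  have hβmem : ∀ n : ℤ, n • β ∈ AddSubgroup.closure (gammaSet v ∪ {β}) :=
    fun n => AddSubgroup.zsmul_mem _ hβS n
  have e1 : ∀ n : ℤ, (ι₀ ⟨n • β, hβmem n⟩ : Λ) = n • γ := by
    intro n
    have h2 : (⟨n • β, hβmem n⟩ : AddSubgroup.closure (gammaSet v ∪ {β})) = n • ⟨β, hβS⟩ := rfl
    rw [h2, map_zsmul, AddSubgroup.coe_zsmul, hmap₀']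
  obtain ⟨m, hm, hmmem⟩ : ∃ m : ℤ, 0 < m ∧ m • x ∈ baseGroup v := by
    obtain ⟨n, hn0, hmem⟩ := hx
    rcases hn0.lt_or_gt with hneg | hpos
    · exact ⟨-n, by omega, by rw [neg_smul]; exact neg_mem hmem⟩
    · exact ⟨n, hpos, hmem⟩
  have e2 : (ι₀ ⟨m • x, hsubβ hmmem⟩ : Λ) = m • x := hfixΓ _ hmmem
  constructor
  · have c1 : k • β ≤ x ↔ (m * k) • β ≤ m • x := by
      rw [mul_smul]
      exact (smul_le_smul_iff_of_pos_left hm).symm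
    have c2 : (m * k) • β ≤ m • x ↔ (m * k) • γ ≤ m • x := by
      rw [hle_iff ((m*k) • β) (m • x) (hβmem (m*k)) (hsubβ hmmem), e1 (m*k), e2]
    have c3 : (m * k) • γ ≤ m • x ↔ k • γ ≤ x := by
      rw [mul_smul]
      exact smul_le_smul_iff_of_pos_left hm
    exact c1.trans (c2.trans c3)
  · have c1 : x ≤ k • β ↔ m • x ≤ (m * k) • β := by
      rw [mul_smul]
      exact (smul_le_smul_iff_of_pos_left hm).symm
    have c2 : m • x ≤ (m * k) • β ↔ m • x ≤ (m * k) • γ := by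
      rw [hle_iff (m • x) ((m*k) • β) (hsubβ hmmem) (hβmem (m*k)), e1 (m*k), e2]
    have c3 : m • x ≤ (m * k) • γ ↔ x ≤ k • γ := by
      rw [mul_smul]
      exact smul_le_smul_iff_of_pos_left hm
    exact c1.trans (c2.trans c3)

variable {μ ν : Polynomial K → WithTop Λ}

lemma coe_nsmul_wt (x : Λ) (n : ℕ) : (n • (x : WithTop Λ)) = ((n • x : Λ) : WithTop Λ) := by
  exact_mod_cast rfl

lemma backward_main (hμ : IsValT v μ) (hν : IsValT v ν) {φc : Polynomial K}
    (hφμ : IsMinKeyPol μ φc) (hφν : IsMinKeyPol ν φc)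
    {β γ : Λ} (hβφ : μ φc = (β : WithTop Λ)) (hγφ : ν φc = (γ : WithTop Λ))
    (hbdeg : ∀ g : Polynomial K, g.natDegree < φc.natDegree → μ g = ν g)
    (hcmp : ∀ (k : ℤ) {x : Λ}, x ∈ torHull v →
      ((k • β ≤ x ↔ k • γ ≤ x) ∧ (x ≤ k • β ↔ x ≤ k • γ)))
    (hsm : ∀ g : Polynomial K, g.natDegree < φc.natDegree →
      μ g = ⊤ ∨ ∃ x ∈ torHull v, μ g = (x : WithTop Λ))
    (f : Polynomial K) :
    (μ f = ⊤ ↔ ν f = ⊤) ∧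
    ∀ z : Λ, μ f = (z : WithTop Λ) →
      ∃ x : Λ, (∃ g : Polynomial K, g.natDegree < φc.natDegree ∧ μ g = (x : WithTop Λ)) ∧
        x ∈ torHull v ∧ ∃ s : ℕ, z = x + (s : ℤ) • β ∧
          ν f = ((x + (s : ℤ) • γ : Λ) : WithTop Λ) := by
  have hmonic := hφμ.1.1
  have hminμ := hφμ.1.2.1
  have hminν := hφν.1.2.1
  have hdpos : 0 < φc.natDegree := hminμ.1
  obtain ⟨N, c, hc, hvan, hrep⟩ := exists_expansion hmonic hdpos f
  have hμf : μ f = (Finset.range N).inf (fun j => μ (c j) + j • μ φc) := by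
    rw [hrep]; exact mu_expansion_min hμ hminμ hmonic.ne_zero N c hc
  have hνf : ν f = (Finset.range N).inf (fun j => μ (c j) + j • ν φc) := by
    rw [hrep, mu_expansion_min hν hminν hmonic.ne_zero N c hc]
    exact Finset.inf_congr rfl (fun j _ => by rw [hbdeg (c j) (hc j)])
  have htermβ : ∀ (j : ℕ) (w : WithTop Λ), (w + j • μ φc = ⊤ ↔ w = ⊤) := by
    intro j w
    rw [hβφ, coe_nsmul_wt]
    constructor
    · intro hcc
      rcases WithTop.add_eq_top.mp hcc with hcc | hcc
      · exact hcc
      · exact absurd hcc WithTop.coe_ne_top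
    · intro hcc; rw [hcc, top_add]
  have htermγ : ∀ (j : ℕ) (w : WithTop Λ), (w + j • ν φc = ⊤ ↔ w = ⊤) := by
    intro j w
    rw [hγφ, coe_nsmul_wt]
    constructor
    · intro hcc
      rcases WithTop.add_eq_top.mp hcc with hcc | hcc
      · exact hcc
      · exact absurd hcc WithTop.coe_ne_top
    · intro hcc; rw [hcc, top_add]
  constructor
  · rw [hμf, hνf, Finset.inf_eq_top_iff, Finset.inf_eq_top_iff]
    exact forall₂_congr fun j hj => by rw [htermβ, htermγ]
  · intro z hz
    have hinfne : (Finset.range N).inf (fun j => μ (c j) + j • μ φc) ≠ ⊤ := by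
      rw [← hμf, hz]; exact WithTop.coe_ne_top
    obtain ⟨j₀, hj₀mem, hj₀⟩ := inf_attain _ _ hinfne
    have hctop : μ (c j₀) ≠ ⊤ := by
      intro hcc
      apply hinfne
      rw [← hj₀]
      exact (htermβ j₀ (μ (c j₀))).mpr hcc
    obtain ⟨x, hxeq'⟩ := WithTop.ne_top_iff_exists.mp hctop
    have hxeq : μ (c j₀) = (x : WithTop Λ) := hxeq'.symm
    have hxtor : x ∈ torHull v := by
      rcases hsm (c j₀) (hc j₀) with ht | ⟨y, hy, hyeq⟩
      · exact absurd ht hctop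
      · rw [hyeq] at hxeq
        exact (WithTop.coe_inj.mp hxeq) ▸ hy
    refine ⟨x, ⟨c j₀, hc j₀, hxeq⟩, hxtor, j₀, ?_, ?_⟩
    · have hcast : (z : WithTop Λ) = ((x + (j₀ : ℤ) • β : Λ) : WithTop Λ) := by
        rw [← hz, hμf, ← hj₀, hxeq, hβφ, natCast_zsmul, coe_nsmul_wt]
        exact_mod_cast rfl
      exact_mod_cast hcast
    · rw [hνf]
      apply le_antisymm
      · refine le_trans (Finset.inf_le hj₀mem) (le_of_eq ?_)
        rw [hxeq, hγφ, natCast_zsmul, coe_nsmul_wt]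
        exact_mod_cast rfl
      · apply Finset.le_inf
        intro j hjmem
        by_cases hcj : μ (c j) = ⊤
        · rw [hcj, top_add]; exact le_top
        · obtain ⟨y, hyeq'⟩ := WithTop.ne_top_iff_exists.mp hcj
          have hyeq : μ (c j) = (y : WithTop Λ) := hyeq'.symm
          have hytor : y ∈ torHull v := by
            rcases hsm (c j) (hc j) with ht | ⟨y', hy', hy'eq⟩
            · exact absurd ht hcj
            · rw [hy'eq] at hyeq
              exact (WithTop.coe_inj.mp hyeq) ▸ hy'
          have h2 : x + (j₀ : ℤ) • β ≤ y + (j : ℤ) • β := by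
            have hterm := Finset.inf_le (f := fun i => μ (c i) + i • μ φc) hjmem
            rw [← hj₀, hxeq, hyeq, hβφ, coe_nsmul_wt, coe_nsmul_wt] at hterm
            rw [natCast_zsmul, natCast_zsmul]
            exact_mod_cast hterm
          have h3 : x + (j₀ : ℤ) • γ ≤ y + (j : ℤ) • γ := by
            rw [addcmp] at h2 ⊢
            exact ((hcmp ((j₀ : ℤ) - j) (sub_mem hytor hxtor)).1).mp h2
          rw [hyeq, hγφ, coe_nsmul_wt]
          have h4 : ((x + (j₀ : ℤ) • γ : Λ) : WithTop Λ) ≤ ((y + (j : ℤ) • γ : Λ) : WithTop Λ) := by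
            exact_mod_cast h3
          refine le_trans h4 (le_of_eq ?_)
          rw [natCast_zsmul]
          exact_mod_cast rfl

lemma backward_dir (hμ : IsValT v μ) (hν : IsValT v ν)
    (hinμ : IsInnerNode μ) (hinν : IsInnerNode ν)
    (hcommon : ∃ φ : Polynomial K, IsMinKeyPol μ φ ∧ IsMinKeyPol ν φ)
    (hb : ∀ a : Polynomial K, a.natDegree < degOf μ → μ a = ν a)
    (hsme : ∃ (φ ψ : Polynomial K) (β γ : Λ), IsMinKeyPol μ φ ∧ IsMinKeyPol ν ψ ∧
      μ φ = (β : WithTop Λ) ∧ ν ψ = (γ : WithTop Λ) ∧ SmeEquiv v β γ) :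
    ValEquiv μ ν := by
  classical
  obtain ⟨φc, hφμ, hφν⟩ := hcommon
  obtain ⟨φ', ψ', β, γ, hφ'μ, hψ'ν, hβ', hγ', ι₀, hmono₀, hfix₀, hmap₀⟩ := hsme
  have hβφ : μ φc = (β : WithTop Λ) := by rw [minKeyPol_val_eq hμ hφμ hφ'μ]; exact hβ'
  have hγφ : ν φc = (γ : WithTop Λ) := by rw [minKeyPol_val_eq hν hφν hψ'ν]; exact hγ'
  have hdegμ : degOf μ = φc.natDegree := degOf_eq hφμ
  have hbdeg : ∀ g : Polynomial K, g.natDegree < φc.natDegree → μ g = ν g := by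
    intro g hg; exact hb g (by rw [hdegμ]; exact hg)
  have hsm : ∀ g : Polynomial K, g.natDegree < φc.natDegree →
      μ g = ⊤ ∨ ∃ x ∈ torHull v, μ g = (x : WithTop Λ) := by
    intro g hg
    exact small_val_torsion hμ hinμ g (by rw [hdegμ]; exact hg)
  have hcmp : ∀ (k : ℤ) {x : Λ}, x ∈ torHull v →
      ((k • β ≤ x ↔ k • γ ≤ x) ∧ (x ≤ k • β ↔ x ≤ k • γ)) :=
    fun k {x} hx => sme_cmp ι₀ hmono₀ hfix₀ hmap₀ k hx
  have hmain := backward_main hμ hν hφμ hφν hβφ hγφ hbdeg hcmp hsm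
  set SD : Set Λ :=
    {x : Λ | ∃ g : Polynomial K, g.natDegree < φc.natDegree ∧ μ g = (x : WithTop Λ)}
    with hSDdef
  have hSDtor : ∀ x ∈ SD, x ∈ torHull v := by
    rintro x ⟨g, hg, hgx⟩
    rcases hsm g hg with ht | ⟨y, hy, hyeq⟩
    · rw [ht] at hgx; exact absurd hgx.symm WithTop.coe_ne_top
    · rw [hyeq] at hgx; exact (WithTop.coe_inj.mp hgx) ▸ hy
  have hG0tor : ∀ x ∈ AddSubgroup.closure SD, x ∈ torHull v := by
    intro x hx
    exact (AddSubgroup.closure_le (torHull v)).mpr hSDtor hx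
  have hG0μ : AddSubgroup.closure SD ≤ valGroup μ := by
    apply (AddSubgroup.closure_le _).mpr
    rintro x ⟨g, _, hgx⟩
    exact AddSubgroup.subset_closure ⟨g, hgx⟩
  have hG0ν : AddSubgroup.closure SD ≤ valGroup ν := by
    apply (AddSubgroup.closure_le _).mpr
    rintro x ⟨g, hg, hgx⟩
    exact AddSubgroup.subset_closure ⟨g, by rw [← hbdeg g hg]; exact hgx⟩
  have hβμ : β ∈ valGroup μ := AddSubgroup.subset_closure ⟨φc, hβφ⟩
  have hγν : γ ∈ valGroup ν := AddSubgroup.subset_closure ⟨φc, hγφ⟩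
  have hmemν : ∀ (x : Λ) (k : ℤ), x ∈ AddSubgroup.closure SD → x + k • γ ∈ valGroup ν :=
    fun x k hx => add_mem (hG0ν hx) (AddSubgroup.zsmul_mem _ hγν k)
  have hmemμ : ∀ (x : Λ) (k : ℤ), x ∈ AddSubgroup.closure SD → x + k • β ∈ valGroup μ :=
    fun x k hx => add_mem (hG0μ hx) (AddSubgroup.zsmul_mem _ hβμ k)
  have hrepμ : ∀ z : Λ, z ∈ valGroup μ →
      ∃ x : Λ, x ∈ AddSubgroup.closure SD ∧ ∃ k : ℤ, z = x + k • β := by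
    intro z hz
    induction hz using AddSubgroup.closure_induction with
    | mem y hy =>
      obtain ⟨f, hf⟩ := hy
      obtain ⟨x, hxSD, _, s, hzeq, _⟩ := (hmain f).2 y hf
      exact ⟨x, AddSubgroup.subset_closure hxSD, s, hzeq⟩
    | zero => exact ⟨0, zero_mem _, 0, by simp⟩
    | add y z _ _ py pz =>
      obtain ⟨x1, h1, k1, e1⟩ := py
      obtain ⟨x2, h2, k2, e2⟩ := pz
      exact ⟨x1 + x2, add_mem h1 h2, k1 + k2, by rw [e1, e2, add_zsmul]; abel⟩
    | neg y _ py =>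
      obtain ⟨x1, h1, k1, e1⟩ := py
      exact ⟨-x1, neg_mem h1, -k1, by rw [e1, neg_zsmul]; abel⟩
  have hrepν : ∀ z : Λ, z ∈ valGroup ν →
      ∃ x : Λ, x ∈ AddSubgroup.closure SD ∧ ∃ k : ℤ, z = x + k • γ := by
    intro z hz
    induction hz using AddSubgroup.closure_induction with
    | mem y hy =>
      obtain ⟨f, hf⟩ := hy
      have hμftop : μ f ≠ ⊤ := by
        intro hcc
        have h1 := (hmain f).1.mp hcc
        rw [h1] at hf
        exact absurd hf.symm WithTop.coe_ne_top
      obtain ⟨z', hz'⟩ := WithTop.ne_top_iff_exists.mp hμftop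
      obtain ⟨x, hxSD, _, s, _, hνeq⟩ := (hmain f).2 z' hz'.symm
      have hcoe : (y : WithTop Λ) = ((x + (s : ℤ) • γ : Λ) : WithTop Λ) := by
        rw [← hf, hνeq]
      exact ⟨x, AddSubgroup.subset_closure hxSD, s, WithTop.coe_inj.mp hcoe⟩
    | zero => exact ⟨0, zero_mem _, 0, by simp⟩
    | add y z _ _ py pz =>
      obtain ⟨x1, h1, k1, e1⟩ := py
      obtain ⟨x2, h2, k2, e2⟩ := pz
      exact ⟨x1 + x2, add_mem h1 h2, k1 + k2, by rw [e1, e2, add_zsmul]; abel⟩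
    | neg y _ py =>
      obtain ⟨x1, h1, k1, e1⟩ := py
      exact ⟨-x1, neg_mem h1, -k1, by rw [e1, neg_zsmul]; abel⟩
  have hwdle : ∀ {x x' : Λ} (k k' : ℤ), x ∈ torHull v → x' ∈ torHull v →
      (x + k • β ≤ x' + k' • β ↔ x + k • γ ≤ x' + k' • γ) := by
    intro x x' k k' hx hx'
    rw [addcmp, addcmp]
    exact (hcmp (k - k') (sub_mem hx' hx)).1
  have hwd : ∀ {x x' : Λ} (k k' : ℤ), x ∈ torHull v → x' ∈ torHull v →
      (x + k • β = x' + k' • β ↔ x + k • γ = x' + k' • γ) := by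
    intro x x' k k' hx hx'
    constructor
    · intro h
      exact le_antisymm ((hwdle k k' hx hx').mp h.le) ((hwdle k' k hx' hx).mp h.ge)
    · intro h
      exact le_antisymm ((hwdle k k' hx hx').mpr h.le) ((hwdle k' k hx' hx).mpr h.ge)
  set F : valGroup μ → valGroup ν := fun z =>
    ⟨(hrepμ z z.2).choose + (hrepμ z z.2).choose_spec.2.choose • γ,
      hmemν _ _ (hrepμ z z.2).choose_spec.1⟩ with hFdef
  have hFval : ∀ (z : valGroup μ) (x : Λ) (k : ℤ), x ∈ AddSubgroup.closure SD →
      (z : Λ) = x + k • β → (F z : Λ) = x + k • γ := by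
    intro z x k hx hzeq
    have h1 := (hrepμ z z.2).choose_spec.1
    have h2 := (hrepμ z z.2).choose_spec.2.choose_spec
    show (hrepμ z z.2).choose + (hrepμ z z.2).choose_spec.2.choose • γ = x + k • γ
    refine (hwd _ _ (hG0tor _ h1) (hG0tor _ hx)).mp ?_
    rw [← h2, ← hzeq]
  set G : valGroup ν → valGroup μ := fun z =>
    ⟨(hrepν z z.2).choose + (hrepν z z.2).choose_spec.2.choose • β,
      hmemμ _ _ (hrepν z z.2).choose_spec.1⟩ with hGdef
  have hGval : ∀ (z : valGroup ν) (x : Λ) (k : ℤ), x ∈ AddSubgroup.closure SD →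
      (z : Λ) = x + k • γ → (G z : Λ) = x + k • β := by
    intro z x k hx hzeq
    have h1 := (hrepν z z.2).choose_spec.1
    have h2 := (hrepν z z.2).choose_spec.2.choose_spec
    show (hrepν z z.2).choose + (hrepν z z.2).choose_spec.2.choose • β = x + k • β
    refine (hwd _ _ (hG0tor _ h1) (hG0tor _ hx)).mpr ?_
    rw [← h2, ← hzeq]
  have hFG : ∀ z, G (F z) = z := by
    intro z
    obtain ⟨x, hx, k, hzeq⟩ := hrepμ z z.2
    have h1 : (F z : Λ) = x + k • γ := hFval z x k hx hzeq
    apply Subtype.ext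
    rw [hGval (F z) x k hx h1, ← hzeq]
  have hGF : ∀ z, F (G z) = z := by
    intro z
    obtain ⟨x, hx, k, hzeq⟩ := hrepν z z.2
    have h1 : (G z : Λ) = x + k • β := hGval z x k hx hzeq
    apply Subtype.ext
    rw [hFval (G z) x k hx h1, ← hzeq]
  have hFadd : ∀ z w, F (z + w) = F z + F w := by
    intro z w
    obtain ⟨x1, h1, k1, e1⟩ := hrepμ z z.2
    obtain ⟨x2, h2, k2, e2⟩ := hrepμ w w.2
    have hsum : ((z + w : valGroup μ) : Λ) = (x1 + x2) + (k1 + k2) • β := by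
      rw [AddSubgroup.coe_add, e1, e2, add_zsmul]; abel
    apply Subtype.ext
    rw [hFval (z + w) _ _ (add_mem h1 h2) hsum, AddSubgroup.coe_add,
      hFval z x1 k1 h1 e1, hFval w x2 k2 h2 e2, add_zsmul]
    abel
  refine ⟨⟨⟨F, G, hFG, hGF⟩, hFadd⟩, ?mono, fun f => (hmain f).1, ?heq⟩
  case mono =>
    intro z w hzw
    obtain ⟨x1, h1, k1, e1⟩ := hrepμ z z.2
    obtain ⟨x2, h2, k2, e2⟩ := hrepμ w w.2
    have hle : x1 + k1 • β ≤ x2 + k2 • β := by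
      rw [← e1, ← e2]
      exact Subtype.coe_le_coe.mpr hzw
    have hle' := (hwdle k1 k2 (hG0tor _ h1) (hG0tor _ h2)).mp hle
    show F z ≤ F w
    rw [← Subtype.coe_le_coe, hFval z x1 k1 h1 e1, hFval w x2 k2 h2 e2]
    exact hle'
  case heq =>
    intro f z hf
    obtain ⟨x, hxSD, _, s, hzeq, hνeq⟩ := (hmain f).2 z hf
    have hEz : (F ⟨z, AddSubgroup.subset_closure ⟨f, hf⟩⟩ : Λ) = x + (s : ℤ) • γ :=
      hFval ⟨z, AddSubgroup.subset_closure ⟨f, hf⟩⟩ x s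
        (AddSubgroup.subset_closure hxSD) hzeq
    rw [hνeq]
    exact_mod_cast hEz.symm

end Backward

end MLVAux

/-- Two inner nodes `μ, ν` are equivalent valuations if and only if (a) they admit a common
key polynomial of minimal degree, (b) they agree on all polynomials of degree `< deg(μ)`,
and (c) `sv(μ) ∼_sme sv(ν)`. In this case `KP(μ) = KP(ν)`. -/
theorem statement_18 {K : Type*} [Field K] {Λ : Type*} [AddCommGroup Λ] [LinearOrder Λ] [IsOrderedAddMonoid Λ]
    (v : FieldVal K Λ) (μ ν : Polynomial K → WithTop Λ)
    (hμ : IsValT v μ) (hν : IsValT v ν)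
    (hinμ : IsInnerNode μ) (hinν : IsInnerNode ν) :
    (ValEquiv μ ν ↔
      ((∃ φ : Polynomial K, IsMinKeyPol μ φ ∧ IsMinKeyPol ν φ) ∧
       (∀ a : Polynomial K, a.natDegree < degOf μ → μ a = ν a) ∧
       ∃ (φ ψ : Polynomial K) (β γ : Λ),
         IsMinKeyPol μ φ ∧ IsMinKeyPol ν ψ ∧
         μ φ = (β : WithTop Λ) ∧ ν ψ = (γ : WithTop Λ) ∧ SmeEquiv v β γ)) ∧
    (ValEquiv μ ν → ∀ φ : Polynomial K, IsKeyPol μ φ ↔ IsKeyPol ν φ) := by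
  constructor
  · constructor
    · intro hE
      exact MLVAux.forward_dir hμ hν hinμ hE
    · rintro ⟨hcommon, hb, hsme⟩
      exact MLVAux.backward_dir hμ hν hinμ hinν hcommon hb hsme
  · intro hE φ
    exact MLVAux.valEquiv_keyPol_iff hE φ
end
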